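/- Let H be a set of n non-vertical planes in ℝ³ in general position and let q ≥ 1 be a parameter. The number of pairs of edges (e, e') of Arr(H) such that the xy-projections of e and e' cross each other and the unique vertical segment connecting e and e' crosses at most q planes of H is O(n³ q). -/

import Mathlib

open scoped Classical

/-- A non-vertical plane in `ℝ³`, represented by coefficients `(a, b, c)`:
the graph `z = a·x + b·y + c`. -/
abbrev GPlane := ℝ × ℝ × ℝ

/-- The set of points of the plane `h`. -/
def gpset (h : GPlane) : Set (Fin 3 → ℝ) :=
  {x | x 2 = h.1 * x 0 + h.2.1 * x 1 + h.2.2}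

/-- The plane `h` lies strictly (vertically) below the point `z`. -/
def IsBelow (h : GPlane) (z : Fin 3 → ℝ) : Prop :=
  h.1 * z 0 + h.2.1 * z 1 + h.2.2 < z 2

/-- The level of a point `z`: the number of planes of `H` strictly below `z`. -/
noncomputable def levelOf (H : Finset GPlane) (z : Fin 3 → ℝ) : ℕ :=
  (H.filter (fun h => IsBelow h z)).card

/-- The `k`-level of the arrangement of `H`: the closure of the set of points
lying on some plane of `H` at level exactly `k`. -/
noncomputable def kLevel (H : Finset GPlane) (k : ℕ) : Set (Fin 3 → ℝ) :=
  closure {z | (∃ h ∈ H, z ∈ gpset h) ∧ levelOf H z = k}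

/-- The crossing distance: the number of planes of `H` meeting the closed
segment `[p, q]`. -/
noncomputable def crDist (H : Finset GPlane) (p q : Fin 3 → ℝ) : ℕ :=
  (H.filter (fun h => (gpset h ∩ segment ℝ p q).Nonempty)).card

/-- The `xy`-projection of a point of `ℝ³`. -/
def proj2 (z : Fin 3 → ℝ) : Fin 2 → ℝ := ![z 0, z 1]

/-- General position: no two planes are parallel, no three planes share a
common line, and no four planes share a common point. -/
def GenPos (H : Finset GPlane) : Prop :=
  (∀ h₁ ∈ H, ∀ h₂ ∈ H, h₁ ≠ h₂ → (h₁.1, h₁.2.1) ≠ (h₂.1, h₂.2.1)) ∧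
  (∀ h₁ ∈ H, ∀ h₂ ∈ H, ∀ h₃ ∈ H, h₁ ≠ h₂ → h₂ ≠ h₃ → h₁ ≠ h₃ →
    ∀ x y : Fin 3 → ℝ,
      x ∈ gpset h₁ ∩ gpset h₂ ∩ gpset h₃ →
      y ∈ gpset h₁ ∩ gpset h₂ ∩ gpset h₃ → x = y) ∧
  (∀ h₁ ∈ H, ∀ h₂ ∈ H, ∀ h₃ ∈ H, ∀ h₄ ∈ H,
    h₁ ≠ h₂ → h₁ ≠ h₃ → h₁ ≠ h₄ → h₂ ≠ h₃ → h₂ ≠ h₄ → h₃ ≠ h₄ →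
    ¬ ∃ x : Fin 3 → ℝ,
      x ∈ gpset h₁ ∩ gpset h₂ ∩ gpset h₃ ∩ gpset h₄)

/-- A (three-dimensional, open) cell of the arrangement `Arr(H)`:
a connected component of the complement of the union of the planes. -/
def IsCell (H : Finset GPlane) (c : Set (Fin 3 → ℝ)) : Prop :=
  ∃ x : Fin 3 → ℝ, x ∉ ⋃ h ∈ H, gpset h ∧
    c = connectedComponentIn (⋃ h ∈ H, gpset h)ᶜ x

/-- The complexity of a cell: the number of nonempty subsets of at most three
planes of `H` whose common intersection meets the closure of the cell
(counting the facets, edges and vertices on the cell boundary). -/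
noncomputable def cellComplexity (H : Finset GPlane) (c : Set (Fin 3 → ℝ)) : ℕ :=
  (H.powerset.filter (fun S => 1 ≤ S.card ∧ S.card ≤ 3 ∧
    ((⋂ h ∈ S, gpset h) ∩ closure c).Nonempty)).card

/-- The set of vertically aligned pairs of points `(x, y)`, with `x` below `y`,
such that `x` and `y` each lie on (the relative interior of) an edge of the
arrangement — i.e. each lies on two distinct planes of `H` — the
`xy`-projections of the two edges cross (the projected directions are
independent), and the open vertical segment joining `x` to `y` crosses at most
`q` planes of `H`.  Each such pair corresponds to a pair of edges `(e, e')` of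
`Arr(H)` whose projections cross with a connecting vertical segment crossing
at most `q` planes. -/
noncomputable def crossingEdgePairs (H : Finset GPlane) (q : ℕ) :
    Set ((Fin 3 → ℝ) × (Fin 3 → ℝ)) :=
  {z | z.1 0 = z.2 0 ∧ z.1 1 = z.2 1 ∧ z.1 2 < z.2 2 ∧
    ∃ h₁ ∈ H, ∃ h₂ ∈ H, ∃ g₁ ∈ H, ∃ g₂ ∈ H, h₁ ≠ h₂ ∧ g₁ ≠ g₂ ∧
      z.1 ∈ gpset h₁ ∩ gpset h₂ ∧ z.2 ∈ gpset g₁ ∩ gpset g₂ ∧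
      (h₁.1 - h₂.1) * (g₁.2.1 - g₂.2.1) -
        (h₁.2.1 - h₂.2.1) * (g₁.1 - g₂.1) ≠ 0 ∧
      (H.filter (fun h =>
        (gpset h ∩ openSegment ℝ z.1 z.2).Nonempty)).card ≤ q}

open List


noncomputable section


noncomputable section

def ev (f : ℝ × ℝ) (t : ℝ) : ℝ := f.1 * t + f.2

def Att (S : Finset (ℝ × ℝ)) (f : ℝ × ℝ) (t : ℝ) : Prop :=
  f ∈ S ∧ 0 < ev f t ∧ ∀ g ∈ S, 0 < ev g t → ev f t ≤ ev g t

lemma att_eq {S : Finset (ℝ × ℝ)} {f g : ℝ × ℝ} {t : ℝ}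
    (hf : Att S f t) (hg : Att S g t) : ev f t = ev g t :=
  le_antisymm (hf.2.2 g hg.1 hg.2.1) (hg.2.2 f hf.1 hf.2.1)

lemma affine_eq {f g : ℝ × ℝ} {s t : ℝ} (h1 : ev f s = ev g s) (h2 : ev f t = ev g t)
    (hst : s ≠ t) : f = g := by
  simp only [ev] at h1 h2
  have key : (f.1 - g.1) * (s - t) = 0 := by linear_combination h1 - h2
  rcases mul_eq_zero.mp key with h | h
  · have hfg1 : f.1 = g.1 := by linarith
    have hfg2 : f.2 = g.2 := by rw [hfg1] at h1; linarith
    exact Prod.ext hfg1 hfg2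
  · exact absurd (by linarith) hst

lemma slope_eq_att {S : Finset (ℝ × ℝ)} {f g : ℝ × ℝ} {t : ℝ}
    (hf : Att S f t) (hg : Att S g t) (hs : f.1 = g.1) : f = g := by
  have he := att_eq hf hg
  simp only [ev] at he
  refine Prod.ext hs ?_
  rw [hs] at he; linarith

lemma pos_later {f : ℝ × ℝ} {t t' : ℝ} (h : 0 < ev f t) (hs : 0 < f.1) (htt : t ≤ t') :
    0 < ev f t' := by
  simp only [ev] at *; nlinarith

lemma nonpos_later {f : ℝ × ℝ} {t t' : ℝ} (h : ev f t ≤ 0) (hs : f.1 ≤ 0) (htt : t ≤ t') :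
    ev f t' ≤ 0 := by
  simp only [ev] at *; nlinarith

lemma dead_core {S : Finset (ℝ × ℝ)} {a b : ℝ × ℝ} {t₁ t₂ : ℝ}
    (hb1 : Att S b t₁) (hb2 : Att S b t₂) (hbpos : 0 < b.1)
    (ha1 : Att S a t₁) (has : a.1 ≤ 0) (hlt : t₁ < t₂) : ev a t₂ ≤ 0 := by
  by_contra hpos
  push_neg at hpos
  have h1 : ev b t₂ ≤ ev a t₂ := hb2.2.2 a ha1.1 hpos
  have he : ev a t₁ = ev b t₁ := att_eq ha1 hb1
  have hb1p := hb1.2.1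
  simp only [ev] at h1 he hpos hb1p
  nlinarith

lemma abab_core {S : Finset (ℝ × ℝ)} {x y : ℝ × ℝ} {t₁ t₂ t₃ t₄ : ℝ}
    (h12 : t₁ < t₂) (h23 : t₂ < t₃) (h34 : t₃ < t₄)
    (hx1 : Att S x t₁) (hx3 : Att S x t₃) (hy2 : Att S y t₂) (hy4 : Att S y t₄)
    (hxs : 0 < x.1) (hys : 0 < y.1) : x = y := by
  have xpos2 : 0 < ev x t₂ := pos_later hx1.2.1 hxs (le_of_lt h12)
  have xpos4 : 0 < ev x t₄ := pos_later hx1.2.1 hxs (by linarith)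
  have ypos3 : 0 < ev y t₃ := pos_later hy2.2.1 hys (le_of_lt h23)
  have d2 : ev y t₂ ≤ ev x t₂ := hy2.2.2 x hx1.1 xpos2
  have d3 : ev x t₃ ≤ ev y t₃ := hx3.2.2 y hy2.1 ypos3
  have d4 : ev y t₄ ≤ ev x t₄ := hy4.2.2 x hx1.1 xpos4
  have idq : (ev y t₃ - ev x t₃) * (t₄ - t₂) =
      (ev y t₂ - ev x t₂) * (t₄ - t₃) + (ev y t₄ - ev x t₄) * (t₃ - t₂) := by
    simp only [ev]; ring
  have hA : (ev y t₂ - ev x t₂) * (t₄ - t₃) ≤ 0 :=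
    mul_nonpos_of_nonpos_of_nonneg (by linarith) (by linarith)
  have hB : (ev y t₄ - ev x t₄) * (t₃ - t₂) ≤ 0 :=
    mul_nonpos_of_nonpos_of_nonneg (by linarith) (by linarith)
  have hL : 0 ≤ (ev y t₃ - ev x t₃) * (t₄ - t₂) :=
    mul_nonneg (by linarith) (by linarith)
  have hA0 : (ev y t₂ - ev x t₂) * (t₄ - t₃) = 0 := by linarith
  have hL0 : (ev y t₃ - ev x t₃) * (t₄ - t₂) = 0 := by linarith
  have e2 : ev y t₂ = ev x t₂ := by
    rcases mul_eq_zero.mp hA0 with h | h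
    · linarith
    · linarith
  have e3 : ev y t₃ = ev x t₃ := by
    rcases mul_eq_zero.mp hL0 with h | h
    · linarith
    · linarith
  exact affine_eq e2.symm e3.symm (ne_of_lt h23)

lemma nn_inj_core {S : Finset (ℝ × ℝ)} {p g' : ℝ × ℝ} {t t' : ℝ} (hlt : t < t')
    (hpt : Att S p t) (hpt' : Att S p t') (hg' : Att S g' t')
    (hslope : p.1 < g'.1) (hg's : g'.1 ≤ 0) : False := by
  have hg'post : 0 < ev g' t := by
    have := hg'.2.1
    simp only [ev] at this ⊢
    nlinarith
  have h1 : ev p t ≤ ev g' t := hpt.2.2 g' hg'.1 hg'post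
  have he : ev p t' = ev g' t' := att_eq hpt' hg'
  simp only [ev] at h1 he
  nlinarith [mul_pos (sub_pos.mpr hslope) (sub_pos.mpr hlt)]

lemma rr_inj_core {S : Finset (ℝ × ℝ)} {p g : ℝ × ℝ} {t t' : ℝ} (hlt : t < t')
    (hpt : Att S p t) (hpt' : Att S p t') (hg : Att S g t)
    (hslope : g.1 < p.1) (hgs : 0 < g.1) : False := by
  have hgpos' : 0 < ev g t' := pos_later hg.2.1 hgs (le_of_lt hlt)
  have h1 : ev p t' ≤ ev g t' := hpt'.2.2 g hg.1 hgpos'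
  have he : ev p t = ev g t := att_eq hpt hg
  simp only [ev] at h1 he
  nlinarith [mul_pos (sub_pos.mpr hslope) (sub_pos.mpr hlt)]

section DS
variable {α : Type*} [DecidableEq α]

def dstt : List α → List α
  | [] => []
  | [a] => [a]
  | a :: b :: l => if a = b then dstt (b :: l) else a :: dstt (b :: l)

def dcount : List α → ℕ
  | a :: b :: l => ((if a = b then 1 else 0) : ℕ) + dcount (b :: l)
  | _ => 0

lemma dstt_sublist : ∀ l : List α, List.Sublist (dstt l) l
  | [] => by simp [dstt]
  | [a] => by simp [dstt]
  | a :: b :: l => by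
      rw [dstt]
      split
      · exact (dstt_sublist (b :: l)).trans (List.sublist_cons_self a (b :: l))
      · exact (dstt_sublist (b :: l)).cons₂ a

lemma dstt_head : ∀ (b : α) (l : List α), ∃ r, dstt (b :: l) = b :: r
  | b, [] => ⟨[], rfl⟩
  | b, c :: l => by
      rw [dstt]
      split
      · rename_i hbc
        obtain ⟨r, hr⟩ := dstt_head c l
        exact ⟨r, by rw [hr, hbc]⟩
      · exact ⟨dstt (c :: l), rfl⟩

lemma dstt_chain' : ∀ l : List α, (dstt l).Chain' (· ≠ ·)
  | [] => by simp [dstt]; exact List.IsChain.nil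
  | [a] => by simp [dstt]; exact List.IsChain.singleton a
  | a :: b :: l => by
      rw [dstt]
      split
      · exact dstt_chain' (b :: l)
      · rename_i hab
        obtain ⟨r, hr⟩ := dstt_head b l
        rw [hr]
        exact List.IsChain.cons_cons hab (hr ▸ dstt_chain' (b :: l))

lemma length_le_dstt : ∀ l : List α, l.length ≤ (dstt l).length + dcount l
  | [] => by simp [dstt, dcount]
  | [a] => by simp [dstt, dcount]
  | a :: b :: l => by
      rw [dstt, dcount]
      split
      · have := length_le_dstt (b :: l)
        simp only [List.length_cons] at *
        omega
      · have := length_le_dstt (b :: l)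
        simp only [List.length_cons] at *
        omega

lemma exists_split_first {a : α} : ∀ {t : List α}, a ∈ t → ∃ u v, t = u ++ a :: v ∧ a ∉ u
  | [], h => by simp at h
  | b :: t, h => by
      by_cases hba : b = a
      · exact ⟨[], t, by simp [hba], by simp⟩
      · have hat : a ∈ t := by
          rcases List.mem_cons.mp h with h' | h'
          · exact absurd h'.symm hba
          · exact h'
        obtain ⟨u, v, rfl, hu⟩ := exists_split_first hat
        refine ⟨b :: u, v, by simp, ?_⟩
        simp only [List.mem_cons]
        rintro (h' | h')
        · exact hba h'.symm
        · exact hu h'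

lemma ds_main : ∀ (N : ℕ) (l : List α), l.length ≤ N → l ≠ [] → l.Chain' (· ≠ ·) →
    (∀ a b : α, a ≠ b → ¬ (List.Sublist [a,b,a,b] l)) → l.length + 1 ≤ 2 * l.toFinset.card := by
  intro N
  induction N with
  | zero => intro l hl hne; cases l <;> simp_all
  | succ N ih =>
    intro l hl hne hc hf
    obtain ⟨a, t, rfl⟩ : ∃ a t, l = a :: t := by
      cases l with
      | nil => exact absurd rfl hne
      | cons a t => exact ⟨a, t, rfl⟩
    by_cases hat : a ∈ t
    · obtain ⟨u, v, rfl, hau⟩ := exists_split_first hat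
      have hune : u ≠ [] := by
        rintro rfl
        simp only [List.nil_append] at hc
        exact (List.isChain_cons_cons.mp hc).1 rfl
      have hcu : u.Chain' (· ≠ ·) := by
        have : u.IsInfix (a :: (u ++ a :: v)) := ⟨[a], a :: v, by simp⟩
        exact hc.infix this
      have hcav : (a :: v).Chain' (· ≠ ·) := by
        have : (a :: v).IsSuffix (a :: (u ++ a :: v)) := ⟨a :: u, by simp⟩
        exact hc.suffix this
      have hsu : List.Sublist u (a :: (u ++ a :: v)) :=
        ((List.sublist_append_left u (a :: v))).trans (List.sublist_cons_self _ _)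
      have hsav : List.Sublist (a :: v) (a :: (u ++ a :: v)) :=
        (List.sublist_append_right u (a :: v)).trans (List.sublist_cons_self _ _)
      have hdisj : Disjoint u.toFinset (a :: v).toFinset := by
        rw [Finset.disjoint_left]
        intro x hxu hxav
        have hxu' : x ∈ u := by simpa using hxu
        have hxa : x ≠ a := fun h => hau (h ▸ hxu')
        have hxv : x ∈ v := by
          simp only [List.toFinset_cons, Finset.mem_insert, List.mem_toFinset] at hxav
          rcases hxav with h | h
          · exact absurd h hxa
          · exact h
        have hsl : List.Sublist [a,x,a,x] (a :: (u ++ a :: v)) := by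
          refine List.Sublist.cons₂ a ?_
          have h1 : List.Sublist [x] u := List.singleton_sublist.mpr hxu'
          have h2 : List.Sublist [a,x] (a :: v) :=
            List.Sublist.cons₂ a (List.singleton_sublist.mpr hxv)
          exact h1.append h2
        exact hf a x (fun h => hxa h.symm) hsl
      have hfin : (a :: (u ++ a :: v)).toFinset = u.toFinset ∪ (a :: v).toFinset := by
        ext x; simp [or_comm, or_assoc, or_left_comm]
      have hlu : u.length + 1 ≤ 2 * u.toFinset.card := by
        refine ih u ?_ hune hcu ?_
        · have := hsu.length_le
          simp only [List.length_cons, List.length_append] at *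
          omega
        · intro x y hxy hs
          exact hf x y hxy (hs.trans hsu)
      have hlav : (a :: v).length + 1 ≤ 2 * (a :: v).toFinset.card := by
        refine ih (a :: v) ?_ (by simp) hcav ?_
        · have hu1 : 1 ≤ u.length := List.length_pos_iff.mpr hune
          simp only [List.length_cons, List.length_append] at *
          omega
        · intro x y hxy hs
          exact hf x y hxy (hs.trans hsav)
      have hcard : (a :: (u ++ a :: v)).toFinset.card
          = u.toFinset.card + (a :: v).toFinset.card := by
        rw [hfin, Finset.card_union_of_disjoint hdisj]
      simp only [List.length_cons, List.length_append] at *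
      omega
    · have hfin : (a :: t).toFinset.card = t.toFinset.card + 1 := by
        rw [List.toFinset_cons, Finset.card_insert_of_notMem (by simpa using hat)]
      cases t with
      | nil => simp
      | cons b s =>
        have hlt : (b :: s).length + 1 ≤ 2 * (b :: s).toFinset.card := by
          refine ih (b :: s) ?_ (by simp) (hc.tail) ?_
          · simp only [List.length_cons] at hl ⊢; omega
          · intro x y hxy hs
            exact hf x y hxy (hs.trans (List.sublist_cons_self _ _))
        simp only [List.length_cons] at *
        omega

lemma ds {l : List α} (hc : l.Chain' (· ≠ ·))
    (hf : ∀ a b : α, a ≠ b → ¬ (List.Sublist [a,b,a,b] l)) :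
    l.length ≤ 2 * l.toFinset.card := by
  rcases eq_or_ne l [] with rfl | hne
  · simp
  · have := ds_main l.length l le_rfl hne hc hf
    omega

end DS

lemma dcount_bound (S : Finset (ℝ × ℝ)) (Bf Af : ℝ → ℝ × ℝ) :
    ∀ lt : List ℝ, lt.Pairwise (· < ·) →
    (∀ t ∈ lt, Att S (Bf t) t ∧ 0 < (Bf t).1 ∧ Att S (Af t) t ∧ (Af t).1 ≤ 0) →
    dcount (lt.map Bf) ≤ (S.filter (fun f => f.1 ≤ 0 ∧ ∃ t ∈ lt, Att S f t)).card
  | [], _, _ => by simp [dcount]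
  | [t], _, _ => by simp [dcount]
  | t₁ :: t₂ :: r, hpw, hyp => by
      have hpw' : (t₂ :: r).Pairwise (· < ·) := (List.pairwise_cons.mp hpw).2
      have hyp' : ∀ t ∈ t₂ :: r, Att S (Bf t) t ∧ 0 < (Bf t).1 ∧ Att S (Af t) t ∧ (Af t).1 ≤ 0 :=
        fun t ht => hyp t (List.mem_cons_of_mem _ ht)
      have ih := dcount_bound S Bf Af (t₂ :: r) hpw' hyp'
      rw [List.map_cons] at ih
      have h12 : t₁ < t₂ := (List.pairwise_cons.mp hpw).1 t₂ (by simp)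
      have hmono : (S.filter (fun f => f.1 ≤ 0 ∧ ∃ t ∈ t₂ :: r, Att S f t)) ⊆
          (S.filter (fun f => f.1 ≤ 0 ∧ ∃ t ∈ t₁ :: t₂ :: r, Att S f t)) := by
        intro f hf
        rw [Finset.mem_filter] at hf ⊢
        obtain ⟨hfS, hsl, t, ht, hAtt⟩ := hf
        exact ⟨hfS, hsl, t, List.mem_cons_of_mem _ ht, hAtt⟩
      simp only [List.map_cons, dcount]
      by_cases hBB : Bf t₁ = Bf t₂
      · rw [if_pos hBB]
        have hdead2 : ev (Af t₁) t₂ ≤ 0 := by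
          refine dead_core (b := Bf t₁) ((hyp t₁ (by simp)).1) ?_
            ((hyp t₁ (by simp)).2.1) ((hyp t₁ (by simp)).2.2.1) ((hyp t₁ (by simp)).2.2.2) h12
          rw [hBB]; exact (hyp t₂ (by simp)).1
        have hnot : Af t₁ ∉ S.filter (fun f => f.1 ≤ 0 ∧ ∃ t ∈ t₂ :: r, Att S f t) := by
          rw [Finset.mem_filter]
          rintro ⟨-, hsl, t, ht, hAtt⟩
          have ht2t : t₂ ≤ t := by
            rcases List.mem_cons.mp ht with rfl | h
            · exact le_refl t
            · exact le_of_lt ((List.pairwise_cons.mp hpw').1 t h)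
          have : ev (Af t₁) t ≤ 0 := nonpos_later hdead2 ((hyp t₁ (by simp)).2.2.2) ht2t
          exact absurd hAtt.2.1 (not_lt.mpr this)
        have hins : insert (Af t₁) (S.filter (fun f => f.1 ≤ 0 ∧ ∃ t ∈ t₂ :: r, Att S f t)) ⊆
            S.filter (fun f => f.1 ≤ 0 ∧ ∃ t ∈ t₁ :: t₂ :: r, Att S f t) := by
          intro f hf
          rcases Finset.mem_insert.mp hf with rfl | hf
          · rw [Finset.mem_filter]
            exact ⟨(hyp t₁ (by simp)).2.2.1.1, (hyp t₁ (by simp)).2.2.2,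
              t₁, by simp, (hyp t₁ (by simp)).2.2.1⟩
          · exact hmono hf
        have hcard := Finset.card_le_card hins
        rw [Finset.card_insert_of_notMem hnot] at hcard
        omega
      · rw [if_neg hBB]
        have := Finset.card_le_card hmono
        omega

theorem lemB (S : Finset (ℝ × ℝ)) (T : Finset ℝ)
    (hT : ∀ t ∈ T, ∃ f g, f ≠ g ∧ Att S f t ∧ Att S g t) :
    T.card ≤ 5 * S.card := by
  classical
  set PNN : ℝ → Prop := fun t => ∃ f g, Att S f t ∧ Att S g t ∧ f.1 < g.1 ∧ g.1 ≤ 0 with hPNN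
  set PRR : ℝ → Prop := fun t => ∃ f g, Att S f t ∧ Att S g t ∧ g.1 < f.1 ∧ 0 < g.1 with hPRR
  set PM : ℝ → Prop := fun t =>
    (∃ b, Att S b t ∧ 0 < b.1) ∧ (∃ a, Att S a t ∧ a.1 ≤ 0) with hPM
  have hcover : T ⊆ T.filter PNN ∪ T.filter PRR ∪ T.filter PM := by
    intro t ht
    obtain ⟨f, g, hfg, hf, hg⟩ := hT t ht
    have hslopes : f.1 ≠ g.1 := fun h => hfg (slope_eq_att hf hg h)
    simp only [Finset.mem_union, Finset.mem_filter]
    rcases le_or_gt f.1 0 with hf1 | hf1 <;> rcases le_or_gt g.1 0 with hg1 | hg1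
    · rcases lt_or_gt_of_ne hslopes with h | h
      · exact Or.inl (Or.inl ⟨ht, f, g, hf, hg, h, hg1⟩)
      · exact Or.inl (Or.inl ⟨ht, g, f, hg, hf, h, hf1⟩)
    · exact Or.inr ⟨ht, ⟨g, hg, hg1⟩, ⟨f, hf, hf1⟩⟩
    · exact Or.inr ⟨ht, ⟨f, hf, hf1⟩, ⟨g, hg, hg1⟩⟩
    · rcases lt_or_gt_of_ne hslopes with h | h
      · exact Or.inl (Or.inr ⟨ht, g, f, hg, hf, h, hf1⟩)
      · exact Or.inl (Or.inr ⟨ht, f, g, hf, hg, h, hg1⟩)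
  have hNN : (T.filter PNN).card ≤ S.card := by
    set φ : ℝ → ℝ × ℝ := fun t => if h : PNN t then h.choose else (0,0) with hφ
    have hφAtt : ∀ t, PNN t → Att S (φ t) t ∧ ∃ g, Att S g t ∧ (φ t).1 < g.1 ∧ g.1 ≤ 0 := by
      intro t h
      have : φ t = h.choose := by rw [hφ]; exact dif_pos h
      rw [this]
      obtain ⟨g, hg1, hg2, hg3, hg4⟩ := h.choose_spec
      exact ⟨hg1, g, hg2, hg3, hg4⟩
    refine Finset.card_le_card_of_injOn φ ?_ ?_
    · intro t ht
      have h := (Finset.mem_filter.mp ht).2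
      exact ((hφAtt t h).1).1
    · intro t ht t' ht' heq
      by_contra hne
      have h := (Finset.mem_filter.mp ht).2
      have h' := (Finset.mem_filter.mp ht').2
      have hAt : Att S (φ t) t := (hφAtt t h).1
      have hAt' : Att S (φ t) t' := by rw [heq]; exact (hφAtt t' h').1
      rcases lt_or_gt_of_ne hne with hlt | hlt
      · obtain ⟨g', hg', hsl, hgs⟩ := (hφAtt t' h').2
        rw [← heq] at hsl
        exact nn_inj_core hlt hAt hAt' hg' hsl hgs
      · obtain ⟨g', hg', hsl, hgs⟩ := (hφAtt t h).2
        exact nn_inj_core hlt hAt' hAt hg' hsl hgs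
  have hRR : (T.filter PRR).card ≤ S.card := by
    set φ : ℝ → ℝ × ℝ := fun t => if h : PRR t then h.choose else (0,0) with hφ
    have hφAtt : ∀ t, PRR t → Att S (φ t) t ∧ ∃ g, Att S g t ∧ g.1 < (φ t).1 ∧ 0 < g.1 := by
      intro t h
      have : φ t = h.choose := by rw [hφ]; exact dif_pos h
      rw [this]
      obtain ⟨g, hg1, hg2, hg3, hg4⟩ := h.choose_spec
      exact ⟨hg1, g, hg2, hg3, hg4⟩
    refine Finset.card_le_card_of_injOn φ ?_ ?_
    · intro t ht
      have h := (Finset.mem_filter.mp ht).2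
      exact ((hφAtt t h).1).1
    · intro t ht t' ht' heq
      by_contra hne
      have h := (Finset.mem_filter.mp ht).2
      have h' := (Finset.mem_filter.mp ht').2
      have hAt : Att S (φ t) t := (hφAtt t h).1
      have hAt' : Att S (φ t) t' := by rw [heq]; exact (hφAtt t' h').1
      rcases lt_or_gt_of_ne hne with hlt | hlt
      · obtain ⟨g, hg, hsl, hgs⟩ := (hφAtt t h).2
        exact rr_inj_core hlt hAt hAt' hg hsl hgs
      · obtain ⟨g, hg, hsl, hgs⟩ := (hφAtt t' h').2
        rw [← heq] at hsl
        exact rr_inj_core hlt hAt' hAt hg hsl hgs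
  have hM : (T.filter PM).card ≤ 3 * S.card := by
    set lt := (T.filter PM).sort (· ≤ ·) with hlt
    have hsorted : lt.Pairwise (· < ·) := List.sortedLT_iff_pairwise.mp (Finset.sortedLT_sort _)
    have hmem : ∀ t ∈ lt, PM t := by
      intro t ht
      rw [hlt, Finset.mem_sort] at ht
      exact (Finset.mem_filter.mp ht).2
    set Bf : ℝ → ℝ × ℝ := fun t => if h : ∃ b, Att S b t ∧ 0 < b.1 then h.choose else (0,0)
      with hBf
    set Af : ℝ → ℝ × ℝ := fun t => if h : ∃ a, Att S a t ∧ a.1 ≤ 0 then h.choose else (0,0)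
      with hAf
    have hBspec : ∀ t, (∃ b, Att S b t ∧ 0 < b.1) → Att S (Bf t) t ∧ 0 < (Bf t).1 := by
      intro t h
      have heq : Bf t = h.choose := by rw [hBf]; exact dif_pos h
      rw [heq]; exact h.choose_spec
    have hAspec : ∀ t, (∃ a, Att S a t ∧ a.1 ≤ 0) → Att S (Af t) t ∧ (Af t).1 ≤ 0 := by
      intro t h
      have heq : Af t = h.choose := by rw [hAf]; exact dif_pos h
      rw [heq]; exact h.choose_spec
    have hyp : ∀ t ∈ lt, Att S (Bf t) t ∧ 0 < (Bf t).1 ∧ Att S (Af t) t ∧ (Af t).1 ≤ 0 := by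
      intro t ht
      obtain ⟨hb, ha⟩ := hmem t ht
      obtain ⟨h1, h2⟩ := hBspec t hb
      obtain ⟨h3, h4⟩ := hAspec t ha
      exact ⟨h1, h2, h3, h4⟩
    set lb := lt.map Bf with hlb
    have hfree : ∀ x y : ℝ × ℝ, x ≠ y → ¬ List.Sublist [x,y,x,y] lb := by
      intro x y hxy hs
      rw [hlb, List.sublist_map_iff] at hs
      obtain ⟨l'', hsub, heq⟩ := hs
      rcases l'' with _ | ⟨t₁, _ | ⟨t₂, _ | ⟨t₃, _ | ⟨t₄, rest⟩⟩⟩⟩ <;>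
        simp only [List.map_nil, List.map_cons, List.cons.injEq] at heq
      · exact absurd heq (by simp)
      · exact absurd heq.2 (by simp)
      · exact absurd heq.2.2 (by simp)
      · exact absurd heq.2.2.2 (by simp)
      obtain ⟨hx1, hy2, hx3, hy4, hrest⟩ := heq
      have hrest' : rest = [] := by
        cases rest with
        | nil => rfl
        | cons a l => simp at hrest
      subst hrest'
      have hpw4 : ([t₁,t₂,t₃,t₄] : List ℝ).Pairwise (· < ·) := hsorted.sublist hsub
      have h12 : t₁ < t₂ := by simp [List.pairwise_cons] at hpw4; tauto
      have h23 : t₂ < t₃ := by simp [List.pairwise_cons] at hpw4; tauto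
      have h34 : t₃ < t₄ := by simp [List.pairwise_cons] at hpw4; tauto
      have m1 : t₁ ∈ lt := hsub.subset (by simp)
      have m2 : t₂ ∈ lt := hsub.subset (by simp)
      have m3 : t₃ ∈ lt := hsub.subset (by simp)
      have m4 : t₄ ∈ lt := hsub.subset (by simp)
      have hx1A : Att S x t₁ := by rw [hx1]; exact (hyp t₁ m1).1
      have hx3A : Att S x t₃ := by rw [hx3]; exact (hyp t₃ m3).1
      have hy2A : Att S y t₂ := by rw [hy2]; exact (hyp t₂ m2).1
      have hy4A : Att S y t₄ := by rw [hy4]; exact (hyp t₄ m4).1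
      have hxs : 0 < x.1 := by rw [hx1]; exact (hyp t₁ m1).2.1
      have hys : 0 < y.1 := by rw [hy2]; exact (hyp t₂ m2).2.1
      exact hxy (abab_core h12 h23 h34 hx1A hx3A hy2A hy4A hxs hys)
    have hfree' : ∀ a b : ℝ × ℝ, a ≠ b → ¬ List.Sublist [a,b,a,b] (dstt lb) :=
      fun a b hab hs => hfree a b hab (hs.trans (dstt_sublist lb))
    have hds : (dstt lb).length ≤ 2 * (dstt lb).toFinset.card := ds (dstt_chain' lb) hfree'
    have hsubS : (dstt lb).toFinset ⊆ S := by
      intro f hf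
      rw [List.mem_toFinset] at hf
      have hf' : f ∈ lb := (dstt_sublist lb).subset hf
      rw [hlb, List.mem_map] at hf'
      obtain ⟨t, ht, hteq⟩ := hf'
      rw [← hteq]
      exact (hyp t ht).1.1
    have hdc := dcount_bound S Bf Af lt hsorted hyp
    have hdcS : dcount lb ≤ S.card :=
      le_trans hdc (Finset.card_le_card (Finset.filter_subset _ _))
    have hlen : (T.filter PM).card = lb.length := by
      rw [hlb, List.length_map, hlt, Finset.length_sort]
    have hlld := length_le_dstt lb
    have hcardS := Finset.card_le_card hsubS
    omega
  have h1 : T.card ≤ (T.filter PNN ∪ T.filter PRR ∪ T.filter PM).card :=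
    Finset.card_le_card hcover
  have h2 := Finset.card_union_le (T.filter PNN ∪ T.filter PRR) (T.filter PM)
  have h3 := Finset.card_union_le (T.filter PNN) (T.filter PRR)
  omega





def hgt (f : GPlane) (x y : ℝ) : ℝ := f.1 * x + f.2.1 * y + f.2.2

abbrev Quad := (GPlane × GPlane) × (GPlane × GPlane)

def detQ (Q : Quad) : ℝ :=
  (Q.1.1.1 - Q.1.2.1) * (Q.2.1.2.1 - Q.2.2.2.1) - (Q.1.1.2.1 - Q.1.2.2.1) * (Q.2.1.1 - Q.2.2.1)

def xQ (Q : Quad) : ℝ :=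
  ((Q.1.2.2.2 - Q.1.1.2.2) * (Q.2.1.2.1 - Q.2.2.2.1)
    - (Q.1.1.2.1 - Q.1.2.2.1) * (Q.2.2.2.2 - Q.2.1.2.2)) / detQ Q

def yQ (Q : Quad) : ℝ :=
  ((Q.1.1.1 - Q.1.2.1) * (Q.2.2.2.2 - Q.2.1.2.2)
    - (Q.1.2.2.2 - Q.1.1.2.2) * (Q.2.1.1 - Q.2.2.1)) / detQ Q

def zQ1 (Q : Quad) : Fin 3 → ℝ := ![xQ Q, yQ Q, hgt Q.1.1 (xQ Q) (yQ Q)]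
def zQ2 (Q : Quad) : Fin 3 → ℝ := ![xQ Q, yQ Q, hgt Q.2.1 (xQ Q) (yQ Q)]

lemma cramer1 (Q : Quad) (hd : detQ Q ≠ 0) :
    (Q.1.1.1 - Q.1.2.1) * xQ Q + (Q.1.1.2.1 - Q.1.2.2.1) * yQ Q
      = Q.1.2.2.2 - Q.1.1.2.2 := by
  rw [xQ, yQ]
  field_simp
  rw [detQ]
  ring

lemma cramer2 (Q : Quad) (hd : detQ Q ≠ 0) :
    (Q.2.1.1 - Q.2.2.1) * xQ Q + (Q.2.1.2.1 - Q.2.2.2.1) * yQ Q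
      = Q.2.2.2.2 - Q.2.1.2.2 := by
  rw [xQ, yQ]
  field_simp
  rw [detQ]
  ring

lemma hgt_h_eq (Q : Quad) (hd : detQ Q ≠ 0) :
    hgt Q.1.1 (xQ Q) (yQ Q) = hgt Q.1.2 (xQ Q) (yQ Q) := by
  have := cramer1 Q hd
  simp only [hgt]
  linarith

lemma hgt_g_eq (Q : Quad) (hd : detQ Q ≠ 0) :
    hgt Q.2.1 (xQ Q) (yQ Q) = hgt Q.2.2 (xQ Q) (yQ Q) := by
  have := cramer2 Q hd
  simp only [hgt]
  linarith

lemma z_unique (Q : Quad) (hd : detQ Q ≠ 0) {z1 z2 : Fin 3 → ℝ}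
    (m1 : z1 ∈ gpset Q.1.1) (m2 : z1 ∈ gpset Q.1.2)
    (m3 : z2 ∈ gpset Q.2.1) (m4 : z2 ∈ gpset Q.2.2)
    (e0 : z1 0 = z2 0) (e1 : z1 1 = z2 1) : z1 = zQ1 Q ∧ z2 = zQ2 Q := by
  simp only [gpset, Set.mem_setOf_eq] at m1 m2 m3 m4
  rw [← e0, ← e1] at m3 m4
  have E1 : (Q.1.1.1 - Q.1.2.1) * z1 0 + (Q.1.1.2.1 - Q.1.2.2.1) * z1 1
      = Q.1.2.2.2 - Q.1.1.2.2 := by linarith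
  have E2 : (Q.2.1.1 - Q.2.2.1) * z1 0 + (Q.2.1.2.1 - Q.2.2.2.1) * z1 1
      = Q.2.2.2.2 - Q.2.1.2.2 := by linarith
  have hx : z1 0 = xQ Q := by
    rw [xQ]
    rw [eq_div_iff hd]
    rw [detQ]
    linear_combination (Q.2.1.2.1 - Q.2.2.2.1) * E1 - (Q.1.1.2.1 - Q.1.2.2.1) * E2
  have hy : z1 1 = yQ Q := by
    rw [yQ]
    rw [eq_div_iff hd]
    rw [detQ]
    linear_combination (Q.1.1.1 - Q.1.2.1) * E2 - (Q.2.1.1 - Q.2.2.1) * E1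
  constructor
  · funext i
    fin_cases i
    · simpa [zQ1] using hx
    · simpa [zQ1] using hy
    · show z1 2 = zQ1 Q 2
      have : zQ1 Q 2 = hgt Q.1.1 (xQ Q) (yQ Q) := by simp [zQ1]
      rw [this, hgt, ← hx, ← hy, m1]
  · funext i
    fin_cases i
    · show z2 0 = zQ2 Q 0
      have : zQ2 Q 0 = xQ Q := by simp [zQ2]
      rw [this, ← e0, hx]
    · show z2 1 = zQ2 Q 1
      have : zQ2 Q 1 = yQ Q := by simp [zQ2]
      rw [this, ← e1, hy]
    · show z2 2 = zQ2 Q 2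
      have : zQ2 Q 2 = hgt Q.2.1 (xQ Q) (yQ Q) := by simp [zQ2]
      rw [this, hgt, ← hx, ← hy, m3]

lemma cross_iff (f : GPlane) {z1 z2 : Fin 3 → ℝ} (h0 : z1 0 = z2 0) (h1 : z1 1 = z2 1)
    (h2 : z1 2 < z2 2) :
    (gpset f ∩ openSegment ℝ z1 z2).Nonempty ↔
      z1 2 < hgt f (z1 0) (z1 1) ∧ hgt f (z1 0) (z1 1) < z2 2 := by
  constructor
  · rintro ⟨w, hwf, hseg⟩
    obtain ⟨a, b, ha, hb, hab, hw⟩ := hseg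
    have hw0 : w 0 = z1 0 := by
      rw [← hw]; simp only [Pi.add_apply, Pi.smul_apply, smul_eq_mul]
      rw [← h0]; linear_combination (z1 0) * hab
    have hw1 : w 1 = z1 1 := by
      rw [← hw]; simp only [Pi.add_apply, Pi.smul_apply, smul_eq_mul]
      rw [← h1]; linear_combination (z1 1) * hab
    have hw2 : w 2 = a * z1 2 + b * z2 2 := by
      rw [← hw]; simp only [Pi.add_apply, Pi.smul_apply, smul_eq_mul]
    simp only [gpset, Set.mem_setOf_eq] at hwf
    have hww : hgt f (z1 0) (z1 1) = a * z1 2 + b * z2 2 := by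
      rw [hgt, ← hw0, ← hw1, ← hwf, hw2]
    have e1 : a * z1 2 + b * z2 2 = z1 2 + b * (z2 2 - z1 2) := by
      linear_combination (z1 2) * hab
    have e2 : a * z1 2 + b * z2 2 = z2 2 - a * (z2 2 - z1 2) := by
      linear_combination (z2 2) * hab
    constructor
    · rw [hww, e1]; nlinarith [mul_pos hb (sub_pos.mpr h2)]
    · rw [hww, e2]; nlinarith [mul_pos ha (sub_pos.mpr h2)]
  · rintro ⟨hlo, hhi⟩
    set c := hgt f (z1 0) (z1 1) with hc
    set b := (c - z1 2) / (z2 2 - z1 2) with hbdef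
    have hden : 0 < z2 2 - z1 2 := by linarith
    have hb : 0 < b := div_pos (by linarith) hden
    have hb1 : b < 1 := by
      rw [hbdef, div_lt_one hden]; linarith
    refine ⟨(1 - b) • z1 + b • z2, ?_, (1 - b), b, by linarith, hb, by ring, rfl⟩
    simp only [gpset, Set.mem_setOf_eq, Pi.add_apply, Pi.smul_apply, smul_eq_mul]
    have h20 : (1 - b) * z1 0 + b * z2 0 = z1 0 := by rw [← h0]; ring
    have h21 : (1 - b) * z1 1 + b * z2 1 = z1 1 := by rw [← h1]; ring
    rw [h20, h21]
    have : (1 - b) * z1 2 + b * z2 2 = z1 2 + b * (z2 2 - z1 2) := by ring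
    rw [this, hbdef]
    have : c = f.1 * z1 0 + f.2.1 * z1 1 + f.2.2 := by rw [hc, hgt]
    field_simp
    linarith [this]



def nxv (h₁ h₂ : GPlane) : ℝ := h₁.1 - h₂.1
def nyv (h₁ h₂ : GPlane) : ℝ := h₁.2.1 - h₂.2.1
def NN (h₁ h₂ : GPlane) : ℝ := nxv h₁ h₂ ^ 2 + nyv h₁ h₂ ^ 2

lemma NN_pos {h₁ h₂ : GPlane} (h : (h₁.1, h₁.2.1) ≠ (h₂.1, h₂.2.1)) : 0 < NN h₁ h₂ := by
  rw [NN, nxv, nyv]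
  rcases lt_or_eq_of_le (by positivity : (0:ℝ) ≤ (h₁.1 - h₂.1) ^ 2 + (h₁.2.1 - h₂.2.1) ^ 2)
    with hlt | heq
  · exact hlt
  · exfalso
    apply h
    have e1 : h₁.1 = h₂.1 := by nlinarith [sq_nonneg (h₁.1 - h₂.1), sq_nonneg (h₁.2.1 - h₂.2.1)]
    have e2 : h₁.2.1 = h₂.2.1 := by
      nlinarith [sq_nonneg (h₁.1 - h₂.1), sq_nonneg (h₁.2.1 - h₂.2.1)]
    rw [e1, e2]

def tau (h₁ h₂ : GPlane) (X Y : ℝ) : ℝ := -(nyv h₁ h₂) * X + nxv h₁ h₂ * Y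

def Gf (h₁ h₂ f : GPlane) : ℝ × ℝ :=
  (((f.1 - h₁.1) * (-(nyv h₁ h₂)) + (f.2.1 - h₁.2.1) * nxv h₁ h₂) / NN h₁ h₂,
   ((f.1 - h₁.1) * nxv h₁ h₂ * (h₂.2.2 - h₁.2.2)
     + (f.2.1 - h₁.2.1) * nyv h₁ h₂ * (h₂.2.2 - h₁.2.2)) / NN h₁ h₂
     + (f.2.2 - h₁.2.2))

lemma ev_Gf (h₁ h₂ : GPlane) (hN : NN h₁ h₂ ≠ 0) (f : GPlane) (X Y : ℝ)
    (hcon : nxv h₁ h₂ * X + nyv h₁ h₂ * Y = h₂.2.2 - h₁.2.2) :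
    ev (Gf h₁ h₂ f) (tau h₁ h₂ X Y) = hgt f X Y - hgt h₁ X Y := by
  rw [ev, Gf, tau, hgt, hgt]
  rw [NN, nxv, nyv] at *
  field_simp
  linear_combination
    (-1) * (((f.1 - h₁.1) * (h₁.1 - h₂.1) + (f.2.1 - h₁.2.1) * (h₁.2.1 - h₂.2.1))) * hcon

lemma Gf_slope_sub (h₁ h₂ g₁ g₂ : GPlane) :
    (Gf h₁ h₂ g₁).1 - (Gf h₁ h₂ g₂).1 =
      ((h₁.1 - h₂.1) * (g₁.2.1 - g₂.2.1) - (h₁.2.1 - h₂.2.1) * (g₁.1 - g₂.1)) / NN h₁ h₂ := by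
  rw [Gf, Gf, nxv, nyv]
  ring


end

noncomputable section

def vq (H' : Finset GPlane) (k : ℕ) (Q : Quad) : Prop :=
  Q.1.1 ≠ Q.1.2 ∧ Q.2.1 ≠ Q.2.2 ∧ detQ Q ≠ 0 ∧ zQ1 Q 2 < zQ2 Q 2 ∧
  (H'.filter (fun f => (gpset f ∩ openSegment ℝ (zQ1 Q) (zQ2 Q)).Nonempty)).card ≤ k

def quadsF (H' : Finset GPlane) (k : ℕ) : Finset Quad :=
  ((H' ×ˢ H') ×ˢ (H' ×ˢ H')).filter (vq H' k)

def tst (Q : Quad) : ℝ := tau Q.1.1 Q.1.2 (xQ Q) (yQ Q)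

lemma zQ1_0 (Q : Quad) : zQ1 Q 0 = xQ Q := by simp [zQ1]
lemma zQ1_1 (Q : Quad) : zQ1 Q 1 = yQ Q := by simp [zQ1]
lemma zQ1_2 (Q : Quad) : zQ1 Q 2 = hgt Q.1.1 (xQ Q) (yQ Q) := by simp [zQ1]
lemma zQ2_0 (Q : Quad) : zQ2 Q 0 = xQ Q := by simp [zQ2]
lemma zQ2_1 (Q : Quad) : zQ2 Q 1 = yQ Q := by simp [zQ2]
lemma zQ2_2 (Q : Quad) : zQ2 Q 2 = hgt Q.2.1 (xQ Q) (yQ Q) := by simp [zQ2]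

lemma cramer1' (Q : Quad) (hd : detQ Q ≠ 0) :
    nxv Q.1.1 Q.1.2 * xQ Q + nyv Q.1.1 Q.1.2 * yQ Q = Q.1.2.2.2 - Q.1.1.2.2 := by
  rw [nxv, nyv]; exact cramer1 Q hd

/-- Attainment facts for a valid quadruple with zero crossings. -/
lemma att_of_vq0 (R : Finset GPlane) (Q : Quad) (hQ : Q ∈ quadsF R 0)
    (hNN : NN Q.1.1 Q.1.2 ≠ 0) :
    Att (R.image (Gf Q.1.1 Q.1.2)) (Gf Q.1.1 Q.1.2 Q.2.1) (tst Q) ∧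
    Att (R.image (Gf Q.1.1 Q.1.2)) (Gf Q.1.1 Q.1.2 Q.2.2) (tst Q) ∧
    Gf Q.1.1 Q.1.2 Q.2.1 ≠ Gf Q.1.1 Q.1.2 Q.2.2 := by
  obtain ⟨hmem, hvq⟩ := Finset.mem_filter.mp hQ
  obtain ⟨hh, hg, hd, hzlt, hcr⟩ := hvq
  have hg1R : Q.2.1 ∈ R := by
    rw [Finset.mem_product] at hmem
    exact (Finset.mem_product.mp hmem.2).1
  have hg2R : Q.2.2 ∈ R := by
    rw [Finset.mem_product] at hmem
    exact (Finset.mem_product.mp hmem.2).2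
  have hev : ∀ f : GPlane, ev (Gf Q.1.1 Q.1.2 f) (tst Q)
      = hgt f (xQ Q) (yQ Q) - hgt Q.1.1 (xQ Q) (yQ Q) := by
    intro f
    exact ev_Gf Q.1.1 Q.1.2 hNN f (xQ Q) (yQ Q) (cramer1' Q hd)
  have hzeta : ev (Gf Q.1.1 Q.1.2 Q.2.1) (tst Q) = zQ2 Q 2 - zQ1 Q 2 := by
    rw [hev, zQ2_2, zQ1_2]
  have hzeta2 : ev (Gf Q.1.1 Q.1.2 Q.2.2) (tst Q) = zQ2 Q 2 - zQ1 Q 2 := by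
    rw [hev, zQ2_2, zQ1_2, hgt_g_eq Q hd]
  have hzpos : 0 < zQ2 Q 2 - zQ1 Q 2 := by linarith
  have hnocross : ∀ f ∈ R, ¬ (gpset f ∩ openSegment ℝ (zQ1 Q) (zQ2 Q)).Nonempty := by
    intro f hf hcross
    have : f ∈ R.filter (fun f => (gpset f ∩ openSegment ℝ (zQ1 Q) (zQ2 Q)).Nonempty) :=
      Finset.mem_filter.mpr ⟨hf, hcross⟩
    have hle := hcr
    have hpos : 0 < (R.filter
        (fun f => (gpset f ∩ openSegment ℝ (zQ1 Q) (zQ2 Q)).Nonempty)).card :=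
      Finset.card_pos.mpr ⟨f, this⟩
    omega
  have hdom : ∀ u ∈ R.image (Gf Q.1.1 Q.1.2), 0 < ev u (tst Q) →
      zQ2 Q 2 - zQ1 Q 2 ≤ ev u (tst Q) := by
    intro u hu hupos
    obtain ⟨f, hfR, rfl⟩ := Finset.mem_image.mp hu
    rw [hev] at hupos ⊢
    by_contra hlt
    push_neg at hlt
    apply hnocross f hfR
    rw [cross_iff f (by rw [zQ1_0, zQ2_0]) (by rw [zQ1_1, zQ2_1]) hzlt]
    rw [zQ1_0, zQ1_1, zQ1_2]
    rw [zQ2_2] at hlt ⊢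
    rw [zQ1_2] at hlt
    constructor
    · linarith
    · linarith
  refine ⟨⟨Finset.mem_image_of_mem _ hg1R, by rw [hzeta]; exact hzpos, ?_⟩,
    ⟨Finset.mem_image_of_mem _ hg2R, by rw [hzeta2]; exact hzpos, ?_⟩, ?_⟩
  · intro u hu hupos
    rw [hzeta]
    exact hdom u hu hupos
  · intro u hu hupos
    rw [hzeta2]
    exact hdom u hu hupos
  · intro heq
    have hsl := Gf_slope_sub Q.1.1 Q.1.2 Q.2.1 Q.2.2
    rw [heq] at hsl
    simp only [sub_self] at hsl
    rw [detQ] at hd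
    have := div_eq_zero_iff.mp hsl.symm
    rcases this with h | h
    · exact hd h
    · exact hNN h
end

noncomputable section

lemma four_distinct {β : Type*} [DecidableEq β] {s : Finset β} (h : 4 ≤ s.card) :
    ∃ a ∈ s, ∃ b ∈ s, ∃ c ∈ s, ∃ d ∈ s,
      a ≠ b ∧ a ≠ c ∧ a ≠ d ∧ b ≠ c ∧ b ≠ d ∧ c ≠ d := by
  obtain ⟨t, hts, ht4⟩ := Finset.exists_subset_card_eq h
  obtain ⟨a, t3, ha3, rfl, h3⟩ := Finset.card_eq_succ.mp ht4
  obtain ⟨b, t2, hb2, rfl, h2⟩ := Finset.card_eq_succ.mp h3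
  obtain ⟨c, t1, hc1, rfl, h1⟩ := Finset.card_eq_succ.mp h2
  obtain ⟨d, hd⟩ := Finset.card_eq_one.mp h1
  subst hd
  simp only [Finset.mem_insert, Finset.mem_singleton] at ha3 hb2 hc1
  refine ⟨a, hts (by simp), b, hts (by simp), c, hts (by simp), d, hts (by simp),
    ?_, ?_, ?_, ?_, ?_, ?_⟩ <;> intro heq <;> subst heq <;> simp_all

lemma pairs_bound (H : Finset GPlane) (hGP : GenPos H) (R : Finset GPlane) (hR : R ⊆ H)
    (h₁ h₂ : GPlane) (h1R : h₁ ∈ R) (h2R : h₂ ∈ R) :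
    ((R ×ˢ R).filter (fun g : GPlane × GPlane => vq R 0 ((h₁, h₂), g))).card
      ≤ 90 * R.card := by
  set P := (R ×ˢ R).filter (fun g : GPlane × GPlane => vq R 0 ((h₁, h₂), g)) with hP
  rcases P.eq_empty_or_nonempty with he | ⟨g₀, hg₀⟩
  · rw [he]; simp
  · have hvq₀ := (Finset.mem_filter.mp hg₀).2
    have hne : h₁ ≠ h₂ := hvq₀.1
    have hNN : NN h₁ h₂ ≠ 0 := ne_of_gt (NN_pos (hGP.1 h₁ (hR h1R) h₂ (hR h2R) hne))
    set S := R.image (Gf h₁ h₂) with hS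
    set m : GPlane × GPlane → ℝ := fun g => tst ((h₁, h₂), g) with hm
    have hQmem : ∀ g ∈ P, ((h₁, h₂), g) ∈ quadsF R 0 := by
      intro g hg
      obtain ⟨hgRR, hvq⟩ := Finset.mem_filter.mp hg
      refine Finset.mem_filter.mpr ⟨?_, hvq⟩
      rw [Finset.mem_product]
      exact ⟨Finset.mem_product.mpr ⟨h1R, h2R⟩, hgRR⟩
    have hatt : ∀ g ∈ P, Att S (Gf h₁ h₂ g.1) (m g) ∧ Att S (Gf h₁ h₂ g.2) (m g) ∧
        Gf h₁ h₂ g.1 ≠ Gf h₁ h₂ g.2 := by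
      intro g hg
      exact att_of_vq0 R ((h₁, h₂), g) (hQmem g hg) hNN
    have himg : P.card ≤ 9 * (P.image m).card := by
      apply Finset.card_le_mul_card_image
      intro t ht
      obtain ⟨g₀', hg₀'P, hgt'⟩ := Finset.mem_image.mp ht
      set Q₀ : Quad := ((h₁, h₂), g₀') with hQ₀
      set Pl := R.filter (fun g => zQ2 Q₀ ∈ gpset g) with hPl
      have hd₀ : detQ Q₀ ≠ 0 := ((Finset.mem_filter.mp hg₀'P).2).2.2.1
      have hPl3 : Pl.card ≤ 3 := by
        by_contra hgt4
        push_neg at hgt4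
        obtain ⟨a, haPl, b, hbPl, c, hcPl, d, hdPl, hab, hac, had, hbc, hbd, hcd⟩ :=
          four_distinct (by omega : 4 ≤ Pl.card)
        have hmemH : ∀ x ∈ Pl, x ∈ H := fun x hx => hR (Finset.mem_filter.mp hx).1
        refine hGP.2.2 a (hmemH a haPl) b (hmemH b hbPl) c (hmemH c hcPl) d (hmemH d hdPl)
          hab hac had hbc hbd hcd ⟨zQ2 Q₀, ?_, ?_⟩
        · exact ⟨⟨(Finset.mem_filter.mp haPl).2, (Finset.mem_filter.mp hbPl).2⟩,
            (Finset.mem_filter.mp hcPl).2⟩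
        · exact (Finset.mem_filter.mp hdPl).2
      have hsub : P.filter (fun g => m g = t) ⊆ Pl ×ˢ Pl := by
        intro g hg
        obtain ⟨hgP, hgm⟩ := Finset.mem_filter.mp hg
        obtain ⟨hgRR, -⟩ := Finset.mem_filter.mp hgP
        have hg1R : g.1 ∈ R := (Finset.mem_product.mp hgRR).1
        have hg2R : g.2 ∈ R := (Finset.mem_product.mp hgRR).2
        have hteq : m g = m g₀' := by rw [hgm, hgt']
        -- evaluate all four ev's at t via Q₀ coordinates
        have hevQ₀ : ∀ f : GPlane, ev (Gf h₁ h₂ f) (m g₀')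
            = hgt f (xQ Q₀) (yQ Q₀) - hgt h₁ (xQ Q₀) (yQ Q₀) := by
          intro f
          exact ev_Gf h₁ h₂ hNN f (xQ Q₀) (yQ Q₀) (cramer1' Q₀ hd₀)
        have hA1 := (hatt g hgP).1
        have hA2 := (hatt g hgP).2.1
        have hA0 := (hatt g₀' hg₀'P).1
        rw [hteq] at hA1 hA2
        have he1 : hgt g.1 (xQ Q₀) (yQ Q₀) = hgt g₀'.1 (xQ Q₀) (yQ Q₀) := by
          have := att_eq hA1 hA0
          rw [hevQ₀, hevQ₀] at this
          linarith
        have he2 : hgt g.2 (xQ Q₀) (yQ Q₀) = hgt g₀'.1 (xQ Q₀) (yQ Q₀) := by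
          have := att_eq hA2 hA0
          rw [hevQ₀, hevQ₀] at this
          linarith
        rw [Finset.mem_product]
        constructor
        · refine Finset.mem_filter.mpr ⟨hg1R, ?_⟩
          show zQ2 Q₀ 2 = g.1.1 * zQ2 Q₀ 0 + g.1.2.1 * zQ2 Q₀ 1 + g.1.2.2
          rw [zQ2_0, zQ2_1, zQ2_2]
          rw [← he1]; rw [hgt]
        · refine Finset.mem_filter.mpr ⟨hg2R, ?_⟩
          show zQ2 Q₀ 2 = g.2.1 * zQ2 Q₀ 0 + g.2.2.1 * zQ2 Q₀ 1 + g.2.2.2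
          rw [zQ2_0, zQ2_1, zQ2_2]
          rw [← he2]; rw [hgt]
      calc (P.filter (fun g => m g = t)).card ≤ (Pl ×ˢ Pl).card := Finset.card_le_card hsub
        _ = Pl.card * Pl.card := Finset.card_product _ _
        _ ≤ 3 * 3 := Nat.mul_le_mul hPl3 hPl3
        _ = 9 := rfl
    have hwit : ∀ t ∈ P.image m, ∃ f g, f ≠ g ∧ Att S f t ∧ Att S g t := by
      intro t ht
      obtain ⟨g, hgP, hgt'⟩ := Finset.mem_image.mp ht
      obtain ⟨hA1, hA2, hne12⟩ := hatt g hgP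
      exact ⟨_, _, hne12, hgt' ▸ hA1, hgt' ▸ hA2⟩
    have hT := lemB S (P.image m) hwit
    have hScard : S.card ≤ R.card := Finset.card_image_le
    calc P.card ≤ 9 * (P.image m).card := himg
      _ ≤ 9 * (5 * S.card) := by omega
      _ ≤ 90 * R.card := by omega

lemma base_bound (H : Finset GPlane) (hGP : GenPos H) (R : Finset GPlane) (hR : R ⊆ H) :
    (quadsF R 0).card ≤ 90 * R.card ^ 3 := by
  have hfib := Finset.card_eq_sum_card_fiberwise
    (f := fun Q : Quad => Q.1) (s := quadsF R 0) (t := R ×ˢ R)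
    (fun Q hQ => (Finset.mem_product.mp (Finset.mem_filter.mp hQ).1).1)
  have hper : ∀ p ∈ R ×ˢ R, ((quadsF R 0).filter (fun Q => Q.1 = p)).card ≤ 90 * R.card := by
    intro p hp
    have hinj : ((quadsF R 0).filter (fun Q => Q.1 = p)).card ≤
        ((R ×ˢ R).filter (fun g : GPlane × GPlane => vq R 0 ((p.1, p.2), g))).card := by
      apply Finset.card_le_card_of_injOn (fun Q => Q.2)
      · intro Q hQ
        obtain ⟨hQq, hQ1⟩ := Finset.mem_filter.mp hQ
        obtain ⟨hQm, hvq⟩ := Finset.mem_filter.mp hQq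
        refine Finset.mem_filter.mpr ⟨(Finset.mem_product.mp hQm).2, ?_⟩
        have : Q = ((p.1, p.2), Q.2) := by
          rw [← hQ1]
        exact this ▸ hvq
      · intro Q hQ Q' hQ' heq
        have h1 : Q.1 = p := (Finset.mem_filter.mp hQ).2
        have h1' : Q'.1 = p := (Finset.mem_filter.mp hQ').2
        exact Prod.ext (h1.trans h1'.symm) heq
    refine le_trans hinj (pairs_bound H hGP R hR p.1 p.2
      (Finset.mem_product.mp hp).1 (Finset.mem_product.mp hp).2)
  calc (quadsF R 0).card = ∑ p ∈ R ×ˢ R, ((quadsF R 0).filter (fun Q => Q.1 = p)).card := hfib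
    _ ≤ ∑ _p ∈ R ×ˢ R, 90 * R.card := Finset.sum_le_sum hper
    _ = (R ×ˢ R).card * (90 * R.card) := by rw [Finset.sum_const, smul_eq_mul]
    _ = 90 * R.card ^ 3 := by rw [Finset.card_product]; ring

end

section CSgen


noncomputable section
variable {γ : Type*} [DecidableEq γ]

lemma sum_w_one (p : ℝ) (C : Finset γ) :
    ∑ R ∈ C.powerset, p ^ R.card * (1 - p) ^ (C.card - R.card) = 1 := by
  induction C using Finset.induction_on with
  | empty => simp
  | @insert a C ha ih =>
    rw [Finset.powerset_insert]
    rw [Finset.sum_union]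
    · have h1 : ∑ R ∈ C.powerset, p ^ R.card * (1 - p) ^ ((insert a C).card - R.card)
          = (1 - p) * ∑ R ∈ C.powerset, p ^ R.card * (1 - p) ^ (C.card - R.card) := by
        rw [Finset.mul_sum]
        apply Finset.sum_congr rfl
        intro R hR
        have hRC : R ⊆ C := Finset.mem_powerset.mp hR
        have hcard : R.card ≤ C.card := Finset.card_le_card hRC
        rw [Finset.card_insert_of_notMem ha]
        have : C.card + 1 - R.card = (C.card - R.card) + 1 := by omega
        rw [this, pow_succ]
        ring
      have h2 : ∑ R ∈ C.powerset.image (insert a), p ^ R.card * (1 - p) ^ ((insert a C).card - R.card)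
          = p * ∑ R ∈ C.powerset, p ^ R.card * (1 - p) ^ (C.card - R.card) := by
        rw [Finset.sum_image, Finset.mul_sum]
        · apply Finset.sum_congr rfl
          intro R hR
          have hRC : R ⊆ C := Finset.mem_powerset.mp hR
          have haR : a ∉ R := fun h => ha (hRC h)
          have hcard : R.card ≤ C.card := Finset.card_le_card hRC
          rw [Finset.card_insert_of_notMem haR, Finset.card_insert_of_notMem ha]
          have : C.card + 1 - (R.card + 1) = C.card - R.card := by omega
          rw [this, pow_succ]
          ring
        · intro R hR R' hR' heq
          have haR : a ∉ R := fun h => ha (Finset.mem_powerset.mp hR h)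
          have haR' : a ∉ R' := fun h => ha (Finset.mem_powerset.mp hR' h)
          ext x
          constructor
          · intro hx
            have : x ∈ insert a R' := heq ▸ Finset.mem_insert_of_mem hx
            rcases Finset.mem_insert.mp this with rfl | h
            · exact absurd hx haR
            · exact h
          · intro hx
            have : x ∈ insert a R := heq ▸ Finset.mem_insert_of_mem hx
            rcases Finset.mem_insert.mp this with rfl | h
            · exact absurd hx haR'
            · exact h
      rw [h1, h2, ih]
      ring
    · rw [Finset.disjoint_left]
      intro R hR hR'
      have haR : a ∉ R := fun h => ha (Finset.mem_powerset.mp hR h)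
      obtain ⟨R', hR', rfl⟩ := Finset.mem_image.mp hR'
      exact haR (Finset.mem_insert_self a R')

lemma sum_w_constr (p : ℝ) (H A B : Finset γ) (hA : A ⊆ H) (hB : B ⊆ H)
    (hAB : Disjoint A B) :
    ∑ R ∈ H.powerset.filter (fun R => A ⊆ R ∧ Disjoint R B),
      p ^ R.card * (1 - p) ^ (H.card - R.card)
    = p ^ A.card * (1 - p) ^ B.card := by
  set C := (H \ A) \ B with hC
  have hCcard : C.card = H.card - A.card - B.card := by
    rw [hC, Finset.card_sdiff_of_subset, Finset.card_sdiff_of_subset hA]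
    intro x hx
    rw [Finset.mem_sdiff]
    exact ⟨hB hx, fun hxA => (Finset.disjoint_left.mp hAB) hxA hx⟩
  have key : ∑ R ∈ H.powerset.filter (fun R => A ⊆ R ∧ Disjoint R B),
      p ^ R.card * (1 - p) ^ (H.card - R.card)
      = ∑ R' ∈ C.powerset, p ^ A.card * (1 - p) ^ B.card *
        (p ^ R'.card * (1 - p) ^ (C.card - R'.card)) := by
    apply Finset.sum_nbij' (i := fun R => R \ A) (j := fun R' => R' ∪ A)
    · intro R hR
      have h := Finset.mem_filter.mp hR
      have hRH : R ⊆ H := Finset.mem_powerset.mp h.1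
      have hRB : Disjoint R B := h.2.2
      rw [Finset.mem_powerset, hC]
      intro x hx
      rw [Finset.mem_sdiff] at hx
      rw [Finset.mem_sdiff, Finset.mem_sdiff]
      exact ⟨⟨hRH hx.1, hx.2⟩, Finset.disjoint_left.mp hRB hx.1⟩
    · intro R' hR'
      have hR'C : R' ⊆ C := Finset.mem_powerset.mp hR'
      rw [Finset.mem_filter, Finset.mem_powerset]
      refine ⟨Finset.union_subset ?_ hA, Finset.subset_union_right, ?_⟩
      · intro x hx
        have := hR'C hx
        rw [hC, Finset.mem_sdiff, Finset.mem_sdiff] at this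
        exact this.1.1
      · rw [Finset.disjoint_left]
        intro x hx hxB
        rcases Finset.mem_union.mp hx with h | h
        · have := hR'C h
          rw [hC, Finset.mem_sdiff] at this
          exact this.2 hxB
        · exact Finset.disjoint_left.mp hAB h hxB
    · intro R hR
      have h := Finset.mem_filter.mp hR
      exact Finset.sdiff_union_of_subset h.2.1
    · intro R' hR'
      have hR'C : R' ⊆ C := Finset.mem_powerset.mp hR'
      have hdisj : Disjoint R' A := by
        rw [Finset.disjoint_left]
        intro x hx hxA
        have := hR'C hx
        rw [hC, Finset.mem_sdiff, Finset.mem_sdiff] at this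
        exact this.1.2 hxA
      rw [Finset.union_sdiff_cancel_right hdisj]
    · intro R hR
      have h := Finset.mem_filter.mp hR
      have hRH : R ⊆ H := Finset.mem_powerset.mp h.1
      have hAR : A ⊆ R := h.2.1
      have hRB : Disjoint R B := h.2.2
      have hc1 : (R \ A).card = R.card - A.card := Finset.card_sdiff_of_subset hAR
      have hcA : A.card ≤ R.card := Finset.card_le_card hAR
      have hcH : R.card ≤ H.card := Finset.card_le_card hRH
      have hRBu : R.card + B.card ≤ H.card := by
        rw [← Finset.card_union_of_disjoint hRB]
        exact Finset.card_le_card (Finset.union_subset hRH hB)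
      have e1 : R.card = A.card + (R \ A).card := by omega
      have e3 : H.card - (A.card + (R \ A).card) = B.card + (C.card - (R \ A).card) := by
        omega
      rw [e1, e3, pow_add, pow_add]
      ring
  rw [key, ← Finset.mul_sum, sum_w_one]
  ring

lemma card_pair_of (a c : γ) (h : a ≠ c) : ({a, c} : Finset γ).card = 2 := by
  rw [Finset.card_insert_of_notMem (by simp [h]), Finset.card_singleton]

lemma card_triple (a b c : γ) :
    (({a, b, c} : Finset γ).card = 3 ∧ a ≠ b ∧ a ≠ c ∧ b ≠ c) ∨
    (({a, b, c} : Finset γ).card = 2 ∧ (a = b ∨ a = c ∨ b = c) ∧ ¬(a = b ∧ b = c)) ∨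
    (({a, b, c} : Finset γ).card = 1 ∧ a = b ∧ b = c) := by
  by_cases h12 : a = b <;> by_cases h13 : a = c <;> by_cases h23 : b = c
  · right; right
    have hset : ({a, b, c} : Finset γ) = {a} := by
      ext t; simp only [Finset.mem_insert, Finset.mem_singleton, ← h12, ← h13]; tauto
    rw [hset]
    exact ⟨Finset.card_singleton a, h12, h23⟩
  · exact absurd (h12.symm.trans h13) h23
  · exact absurd (h12.trans h23) h13
  · right; left
    have hset : ({a, b, c} : Finset γ) = {a, c} := by
      ext t; simp only [Finset.mem_insert, Finset.mem_singleton, ← h12]; tauto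
    rw [hset]
    exact ⟨card_pair_of a c h13, by tauto, by tauto⟩
  · exact absurd (h13.trans h23.symm) h12
  · right; left
    have hset : ({a, b, c} : Finset γ) = {a, b} := by
      ext t; simp only [Finset.mem_insert, Finset.mem_singleton, ← h13]; tauto
    rw [hset]
    exact ⟨card_pair_of a b h12, by tauto, by tauto⟩
  · right; left
    have hset : ({a, b, c} : Finset γ) = {a, b} := by
      ext t; simp only [Finset.mem_insert, Finset.mem_singleton, ← h23]; tauto
    rw [hset]
    exact ⟨card_pair_of a b h12, by tauto, by tauto⟩
  · left
    refine ⟨?_, h12, h13, h23⟩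
    rw [Finset.card_insert_of_notMem (by simp [h12, h13]),
      Finset.card_insert_of_notMem (by simp [h23]), Finset.card_singleton]


lemma moment_cube (p : ℝ) (hp0 : 0 ≤ p) (hp1 : p ≤ 1) (H : Finset γ) :
    ∑ R ∈ H.powerset, (p ^ R.card * (1 - p) ^ (H.card - R.card)) * (R.card : ℝ) ^ 3
      ≤ (H.card : ℝ) ^ 3 * p ^ 3 + 3 * (H.card : ℝ) ^ 2 * p ^ 2 + (H.card : ℝ) * p := by
  set w : Finset γ → ℝ := fun R => p ^ R.card * (1 - p) ^ (H.card - R.card) with hw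
  have hw0 : ∀ R, 0 ≤ w R := fun R => by
    apply mul_nonneg (pow_nonneg hp0 _) (pow_nonneg (by linarith) _)
  set prod3 := H ×ˢ (H ×ˢ H) with hprod3
  have hsq : ∀ R ∈ H.powerset, ((R.card : ℝ)) ^ 3
      = ∑ τ ∈ prod3, (if τ.1 ∈ R ∧ τ.2.1 ∈ R ∧ τ.2.2 ∈ R then (1:ℝ) else 0) := by
    intro R hR
    have hRH : R ⊆ H := Finset.mem_powerset.mp hR
    rw [Finset.sum_boole]
    have hfe : prod3.filter (fun τ => τ.1 ∈ R ∧ τ.2.1 ∈ R ∧ τ.2.2 ∈ R) = R ×ˢ (R ×ˢ R) := by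
      ext τ
      simp only [Finset.mem_filter, Finset.mem_product, hprod3]
      constructor
      · rintro ⟨-, h1, h2, h3⟩; exact ⟨h1, h2, h3⟩
      · rintro ⟨h1, h2, h3⟩; exact ⟨⟨hRH h1, hRH h2, hRH h3⟩, h1, h2, h3⟩
    rw [hfe, Finset.card_product, Finset.card_product]
    push_cast
    ring
  have hstep2 : ∑ R ∈ H.powerset, w R * (R.card : ℝ) ^ 3
      = ∑ τ ∈ prod3, ∑ R ∈ H.powerset,
          (if τ.1 ∈ R ∧ τ.2.1 ∈ R ∧ τ.2.2 ∈ R then w R else 0) := by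
    rw [← Finset.sum_comm]
    apply Finset.sum_congr rfl
    intro R hR
    rw [hsq R hR, Finset.mul_sum]
    apply Finset.sum_congr rfl
    intro τ _
    split <;> simp
  have hinner : ∀ τ ∈ prod3, ∑ R ∈ H.powerset,
      (if τ.1 ∈ R ∧ τ.2.1 ∈ R ∧ τ.2.2 ∈ R then w R else 0)
      = p ^ ({τ.1, τ.2.1, τ.2.2} : Finset γ).card := by
    intro τ hτ
    have hτH : τ.1 ∈ H ∧ τ.2.1 ∈ H ∧ τ.2.2 ∈ H := by
      rw [hprod3] at hτ
      simp only [Finset.mem_product] at hτ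
      exact ⟨hτ.1, hτ.2.1, hτ.2.2⟩
    rw [← Finset.sum_filter]
    have hfc : H.powerset.filter (fun R => τ.1 ∈ R ∧ τ.2.1 ∈ R ∧ τ.2.2 ∈ R)
        = H.powerset.filter (fun R => ({τ.1, τ.2.1, τ.2.2} : Finset γ) ⊆ R ∧ Disjoint R ∅) := by
      apply Finset.filter_congr
      intro R _
      simp only [Finset.insert_subset_iff, Finset.singleton_subset_iff,
        Finset.disjoint_empty_right, and_true]
    rw [hfc, sum_w_constr p H _ ∅ ?_ (Finset.empty_subset H) (Finset.disjoint_empty_right _)]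
    · simp
    · rw [Finset.insert_subset_iff, Finset.insert_subset_iff, Finset.singleton_subset_iff]
      exact ⟨hτH.1, hτH.2.1, hτH.2.2⟩
  have hbound : ∀ τ ∈ prod3, p ^ ({τ.1, τ.2.1, τ.2.2} : Finset γ).card
      ≤ p ^ 3 + (if τ.1 = τ.2.1 then p ^ 2 else 0) + (if τ.1 = τ.2.2 then p ^ 2 else 0)
        + (if τ.2.1 = τ.2.2 then p ^ 2 else 0)
        + (if τ.1 = τ.2.1 ∧ τ.2.1 = τ.2.2 then p else 0) := by
    intro τ _
    have hp2 : (0:ℝ) ≤ p ^ 2 := pow_nonneg hp0 2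
    have hp3 : (0:ℝ) ≤ p ^ 3 := pow_nonneg hp0 3
    have hmono : p ^ 3 ≤ p ^ 2 := pow_le_pow_of_le_one hp0 hp1 (by norm_num)
    have hmono2 : p ^ 2 ≤ p ^ 1 := pow_le_pow_of_le_one hp0 hp1 (by norm_num)
    rcases card_triple τ.1 τ.2.1 τ.2.2 with ⟨hc, h1, h2, h3⟩ | ⟨hc, hor, hne⟩ | ⟨hc, he1, he2⟩
    · rw [hc, if_neg h1, if_neg h2, if_neg h3, if_neg (by tauto)]
      linarith
    · rw [hc]
      have nA : (0:ℝ) ≤ (if τ.1 = τ.2.1 then p ^ 2 else 0) := by split <;> simp [hp2]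
      have nB : (0:ℝ) ≤ (if τ.1 = τ.2.2 then p ^ 2 else 0) := by split <;> simp [hp2]
      have nC : (0:ℝ) ≤ (if τ.2.1 = τ.2.2 then p ^ 2 else 0) := by split <;> simp [hp2]
      have nD : (0:ℝ) ≤ (if τ.1 = τ.2.1 ∧ τ.2.1 = τ.2.2 then p else 0) := by
        split <;> simp [hp0]
      rcases hor with h | h | h
      · rw [if_pos h]; linarith
      · rw [if_pos h]; linarith
      · rw [if_pos h]; linarith
    · rw [hc, if_pos he1, if_pos he2, if_pos (he1.trans he2), if_pos ⟨he1, he2⟩]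
      have : p ^ 1 = p := pow_one p
      linarith
  have hfilter1 : (prod3.filter (fun τ => τ.1 = τ.2.1)).card ≤ H.card * H.card := by
    rw [← Finset.card_product H H]
    apply Finset.card_le_card_of_injOn (fun τ => (τ.1, τ.2.2))
    · intro τ hτ
      obtain ⟨hm, -⟩ := Finset.mem_filter.mp hτ
      rw [hprod3] at hm
      simp only [Finset.mem_coe, Finset.mem_product] at hm ⊢
      exact ⟨hm.1, hm.2.2⟩
    · intro τ hτ τ' hτ' heq
      obtain ⟨-, he⟩ := Finset.mem_filter.mp hτ
      obtain ⟨-, he'⟩ := Finset.mem_filter.mp hτ'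
      simp only [Prod.mk.injEq] at heq
      have h21 : τ.2.1 = τ'.2.1 := by rw [← he, ← he', heq.1]
      exact Prod.ext heq.1 (Prod.ext h21 heq.2)
  have hfilter2 : (prod3.filter (fun τ => τ.1 = τ.2.2)).card ≤ H.card * H.card := by
    rw [← Finset.card_product H H]
    apply Finset.card_le_card_of_injOn (fun τ => (τ.1, τ.2.1))
    · intro τ hτ
      obtain ⟨hm, -⟩ := Finset.mem_filter.mp hτ
      rw [hprod3] at hm
      simp only [Finset.mem_coe, Finset.mem_product] at hm ⊢
      exact ⟨hm.1, hm.2.1⟩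
    · intro τ hτ τ' hτ' heq
      obtain ⟨-, he⟩ := Finset.mem_filter.mp hτ
      obtain ⟨-, he'⟩ := Finset.mem_filter.mp hτ'
      simp only [Prod.mk.injEq] at heq
      have h22 : τ.2.2 = τ'.2.2 := by rw [← he, ← he', heq.1]
      exact Prod.ext heq.1 (Prod.ext heq.2 h22)
  have hfilter3 : (prod3.filter (fun τ => τ.2.1 = τ.2.2)).card ≤ H.card * H.card := by
    rw [← Finset.card_product H H]
    apply Finset.card_le_card_of_injOn (fun τ => (τ.1, τ.2.1))
    · intro τ hτ
      obtain ⟨hm, -⟩ := Finset.mem_filter.mp hτ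
      rw [hprod3] at hm
      simp only [Finset.mem_coe, Finset.mem_product] at hm ⊢
      exact ⟨hm.1, hm.2.1⟩
    · intro τ hτ τ' hτ' heq
      obtain ⟨-, he⟩ := Finset.mem_filter.mp hτ
      obtain ⟨-, he'⟩ := Finset.mem_filter.mp hτ'
      simp only [Prod.mk.injEq] at heq
      have h22 : τ.2.2 = τ'.2.2 := by rw [← he, ← he', heq.2]
      exact Prod.ext heq.1 (Prod.ext heq.2 h22)
  have hfilter4 : (prod3.filter (fun τ => τ.1 = τ.2.1 ∧ τ.2.1 = τ.2.2)).card ≤ H.card := by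
    apply Finset.card_le_card_of_injOn (fun τ => τ.1)
    · intro τ hτ
      obtain ⟨hm, -⟩ := Finset.mem_filter.mp hτ
      rw [hprod3] at hm
      simp only [Finset.mem_product] at hm
      exact hm.1
    · intro τ hτ τ' hτ' heq
      obtain ⟨-, he1, he2⟩ := Finset.mem_filter.mp hτ
      obtain ⟨-, he1', he2'⟩ := Finset.mem_filter.mp hτ'
      have heq' : τ.1 = τ'.1 := heq
      have h21 : τ.2.1 = τ'.2.1 := by rw [← he1, ← he1', heq']
      have h22 : τ.2.2 = τ'.2.2 := by rw [← he2, ← he2', h21]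
      exact Prod.ext heq' (Prod.ext h21 h22)
  calc ∑ R ∈ H.powerset, w R * (R.card : ℝ) ^ 3
      = ∑ τ ∈ prod3, ∑ R ∈ H.powerset,
          (if τ.1 ∈ R ∧ τ.2.1 ∈ R ∧ τ.2.2 ∈ R then w R else 0) := hstep2
    _ = ∑ τ ∈ prod3, p ^ ({τ.1, τ.2.1, τ.2.2} : Finset γ).card :=
        Finset.sum_congr rfl hinner
    _ ≤ ∑ τ ∈ prod3, (p ^ 3 + (if τ.1 = τ.2.1 then p ^ 2 else 0)
          + (if τ.1 = τ.2.2 then p ^ 2 else 0) + (if τ.2.1 = τ.2.2 then p ^ 2 else 0)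
          + (if τ.1 = τ.2.1 ∧ τ.2.1 = τ.2.2 then p else 0)) :=
        Finset.sum_le_sum hbound
    _ ≤ (H.card : ℝ) ^ 3 * p ^ 3 + 3 * (H.card : ℝ) ^ 2 * p ^ 2 + (H.card : ℝ) * p := by
        rw [Finset.sum_add_distrib, Finset.sum_add_distrib, Finset.sum_add_distrib,
          Finset.sum_add_distrib]
        have e0 : ∑ _τ ∈ prod3, p ^ 3 = ((H.card : ℝ) * ((H.card : ℝ) * (H.card : ℝ))) * p ^ 3 := by
          rw [Finset.sum_const, hprod3, Finset.card_product, Finset.card_product]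
          push_cast
          ring
        have e1 : ∑ τ ∈ prod3, (if τ.1 = τ.2.1 then p ^ 2 else 0)
            = ((prod3.filter (fun τ => τ.1 = τ.2.1)).card : ℝ) * p ^ 2 := by
          rw [Finset.sum_ite, Finset.sum_const, Finset.sum_const_zero, add_zero, nsmul_eq_mul]
        have e2 : ∑ τ ∈ prod3, (if τ.1 = τ.2.2 then p ^ 2 else 0)
            = ((prod3.filter (fun τ => τ.1 = τ.2.2)).card : ℝ) * p ^ 2 := by
          rw [Finset.sum_ite, Finset.sum_const, Finset.sum_const_zero, add_zero, nsmul_eq_mul]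
        have e3 : ∑ τ ∈ prod3, (if τ.2.1 = τ.2.2 then p ^ 2 else 0)
            = ((prod3.filter (fun τ => τ.2.1 = τ.2.2)).card : ℝ) * p ^ 2 := by
          rw [Finset.sum_ite, Finset.sum_const, Finset.sum_const_zero, add_zero, nsmul_eq_mul]
        have e4 : ∑ τ ∈ prod3, (if τ.1 = τ.2.1 ∧ τ.2.1 = τ.2.2 then p else 0)
            = ((prod3.filter (fun τ => τ.1 = τ.2.1 ∧ τ.2.1 = τ.2.2)).card : ℝ) * p := by
          rw [Finset.sum_ite, Finset.sum_const, Finset.sum_const_zero, add_zero, nsmul_eq_mul]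
        rw [e0, e1, e2, e3, e4]
        have hp2 : (0:ℝ) ≤ p ^ 2 := pow_nonneg hp0 2
        have c1 : ((prod3.filter (fun τ => τ.1 = τ.2.1)).card : ℝ)
            ≤ (H.card : ℝ) * (H.card : ℝ) := by exact_mod_cast hfilter1
        have c2 : ((prod3.filter (fun τ => τ.1 = τ.2.2)).card : ℝ)
            ≤ (H.card : ℝ) * (H.card : ℝ) := by exact_mod_cast hfilter2
        have c3 : ((prod3.filter (fun τ => τ.2.1 = τ.2.2)).card : ℝ)
            ≤ (H.card : ℝ) * (H.card : ℝ) := by exact_mod_cast hfilter3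
        have c4 : ((prod3.filter (fun τ => τ.1 = τ.2.1 ∧ τ.2.1 = τ.2.2)).card : ℝ)
            ≤ (H.card : ℝ) := by exact_mod_cast hfilter4
        nlinarith [mul_le_mul_of_nonneg_right c1 hp2, mul_le_mul_of_nonneg_right c2 hp2,
          mul_le_mul_of_nonneg_right c3 hp2, mul_le_mul_of_nonneg_right c4 hp0]

end

end CSgen

noncomputable section

def AQ (Q : Quad) : Finset GPlane := insert Q.1.1 (insert Q.1.2 (insert Q.2.1 {Q.2.2}))

def BQ (H : Finset GPlane) (Q : Quad) : Finset GPlane :=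
  H.filter (fun f => (gpset f ∩ openSegment ℝ (zQ1 Q) (zQ2 Q)).Nonempty)

lemma AQ_card (Q : Quad) : (AQ Q).card ≤ 4 := by
  rw [AQ]
  refine le_trans (Finset.card_insert_le _ _) ?_
  have h2 := Finset.card_insert_le Q.1.2 (insert Q.2.1 {Q.2.2})
  have h3 := Finset.card_insert_le Q.2.1 ({Q.2.2} : Finset GPlane)
  have h4 : ({Q.2.2} : Finset GPlane).card = 1 := Finset.card_singleton _
  omega

lemma AQ_disj_BQ (H : Finset GPlane) (Q : Quad) (hd : detQ Q ≠ 0)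
    (hzlt : zQ1 Q 2 < zQ2 Q 2) : Disjoint (AQ Q) (BQ H Q) := by
  rw [Finset.disjoint_left]
  intro x hxA hxB
  have hcr := (Finset.mem_filter.mp hxB).2
  rw [cross_iff x (by rw [zQ1_0, zQ2_0]) (by rw [zQ1_1, zQ2_1]) hzlt] at hcr
  rw [zQ1_0, zQ1_1] at hcr
  rw [AQ] at hxA
  simp only [Finset.mem_insert, Finset.mem_singleton] at hxA
  rcases hxA with rfl | rfl | rfl | rfl
  · rw [show hgt Q.1.1 (xQ Q) (yQ Q) = zQ1 Q 2 from (zQ1_2 Q).symm] at hcr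
    exact lt_irrefl _ hcr.1
  · rw [show hgt Q.1.2 (xQ Q) (yQ Q) = zQ1 Q 2 by rw [← hgt_h_eq Q hd]; exact (zQ1_2 Q).symm]
      at hcr
    exact lt_irrefl _ hcr.1
  · rw [show hgt Q.2.1 (xQ Q) (yQ Q) = zQ2 Q 2 from (zQ2_2 Q).symm] at hcr
    exact lt_irrefl _ hcr.2
  · rw [show hgt Q.2.2 (xQ Q) (yQ Q) = zQ2 Q 2 by rw [← hgt_g_eq Q hd]; exact (zQ2_2 Q).symm]
      at hcr
    exact lt_irrefl _ hcr.2

lemma quad_restrict (H R : Finset GPlane) (q : ℕ) (Q : Quad) (hQ : Q ∈ quadsF H q)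
    (hA : AQ Q ⊆ R) (hR : R ⊆ H) (hB : Disjoint R (BQ H Q)) : Q ∈ quadsF R 0 := by
  obtain ⟨hQm, hh, hg, hd, hzlt, -⟩ := Finset.mem_filter.mp hQ
  have hmem : ∀ x ∈ AQ Q, x ∈ R := fun x hx => hA hx
  have h11 : Q.1.1 ∈ R := hmem _ (by rw [AQ]; simp)
  have h12 : Q.1.2 ∈ R := hmem _ (by rw [AQ]; simp)
  have h21 : Q.2.1 ∈ R := hmem _ (by rw [AQ]; simp)
  have h22 : Q.2.2 ∈ R := hmem _ (by rw [AQ]; simp)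
  refine Finset.mem_filter.mpr ⟨?_, hh, hg, hd, hzlt, ?_⟩
  · rw [Finset.mem_product]
    exact ⟨Finset.mem_product.mpr ⟨h11, h12⟩, Finset.mem_product.mpr ⟨h21, h22⟩⟩
  · have : R.filter (fun f => (gpset f ∩ openSegment ℝ (zQ1 Q) (zQ2 Q)).Nonempty) = ∅ := by
      rw [Finset.filter_eq_empty_iff]
      intro f hf hcr
      have hfB : f ∈ BQ H Q := Finset.mem_filter.mpr ⟨hR hf, hcr⟩
      exact Finset.disjoint_left.mp hB hf hfB
    rw [this]
    simp

lemma Nq_bound (H : Finset GPlane) (hGP : GenPos H) (q : ℕ) (hq : 1 ≤ q) :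
    ((quadsF H q).card : ℝ) ≤ 4000 * (H.card : ℝ) ^ 3 * q := by
  have hq0 : (0:ℝ) < q := by exact_mod_cast hq
  have hn0 : (0:ℝ) ≤ (H.card : ℝ) := Nat.cast_nonneg _
  by_cases hqn : H.card ≤ q
  · have h1 : (quadsF H q).card ≤ ((H ×ˢ H) ×ˢ (H ×ˢ H)).card := Finset.card_filter_le _ _
    have h2 : ((H ×ˢ H) ×ˢ (H ×ˢ H)).card = H.card * H.card * (H.card * H.card) := by
      simp [Finset.card_product]
    have h3 : ((quadsF H q).card : ℝ) ≤ (H.card : ℝ)^3 * (H.card : ℝ) := by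
      have := h1
      rw [h2] at this
      have := (Nat.cast_le (α := ℝ)).mpr this
      push_cast at this
      nlinarith [this]
    have hcast : (H.card : ℝ) ≤ (q : ℝ) := by exact_mod_cast hqn
    calc ((quadsF H q).card : ℝ) ≤ (H.card : ℝ)^3 * (H.card : ℝ) := h3
      _ ≤ (H.card : ℝ)^3 * q := by nlinarith [pow_nonneg hn0 3]
      _ ≤ 4000 * (H.card : ℝ)^3 * q := by nlinarith [pow_nonneg hn0 3]
  · push_neg at hqn
    set p : ℝ := 1 / (2 * q) with hp
    have hp0 : 0 < p := by rw [hp]; positivity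
    have hp1 : p ≤ 1 := by
      rw [hp]
      rw [div_le_one (by positivity)]
      have hq1 : (1:ℝ) ≤ q := by exact_mod_cast hq
      linarith
    have h1p : 0 ≤ 1 - p := by
      have : p ≤ 1 := hp1
      linarith
    have hbern : (1:ℝ)/2 ≤ (1 - p) ^ q := by
      have := one_add_mul_le_pow (a := -p) (by linarith : (-2:ℝ) ≤ -p) q
      have hqp : (q:ℝ) * p = 1/2 := by
        rw [hp]
        field_simp
      calc (1:ℝ)/2 = 1 + (q:ℝ) * (-p) := by rw [mul_neg, hqp]; ring
        _ ≤ (1 + -p) ^ q := this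
        _ = (1 - p) ^ q := by ring_nf
    set w : Finset GPlane → ℝ := fun R => p ^ R.card * (1 - p) ^ (H.card - R.card) with hw
    have hw0 : ∀ R, 0 ≤ w R := fun R =>
      mul_nonneg (pow_nonneg (le_of_lt hp0) _) (pow_nonneg h1p _)
    -- step L1
    have hperQ : ∀ Q ∈ quadsF H q, p ^ 4 * (1/2) ≤ p ^ (AQ Q).card * (1 - p) ^ (BQ H Q).card := by
      intro Q hQ
      have hA4 : p ^ 4 ≤ p ^ (AQ Q).card :=
        pow_le_pow_of_le_one (le_of_lt hp0) hp1 (AQ_card Q)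
      have hBq : (BQ H Q).card ≤ q := (Finset.mem_filter.mp hQ).2.2.2.2.2
      have hB2 : (1:ℝ)/2 ≤ (1 - p) ^ (BQ H Q).card :=
        le_trans hbern (pow_le_pow_of_le_one h1p (by linarith) hBq)
      have := mul_le_mul hA4 hB2 (by norm_num) (pow_nonneg (le_of_lt hp0) _)
      linarith
    have hL1 : ((quadsF H q).card : ℝ) * (p ^ 4 * (1/2))
        ≤ ∑ Q ∈ quadsF H q, p ^ (AQ Q).card * (1 - p) ^ (BQ H Q).card := by
      calc ((quadsF H q).card : ℝ) * (p ^ 4 * (1/2))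
          = ∑ _Q ∈ quadsF H q, p ^ 4 * (1/2) := by rw [Finset.sum_const, nsmul_eq_mul]
        _ ≤ _ := Finset.sum_le_sum hperQ
    -- step L2
    have hL2 : ∑ Q ∈ quadsF H q, p ^ (AQ Q).card * (1 - p) ^ (BQ H Q).card
        = ∑ Q ∈ quadsF H q, ∑ R ∈ H.powerset.filter (fun R => AQ Q ⊆ R ∧ Disjoint R (BQ H Q)),
            w R := by
      apply Finset.sum_congr rfl
      intro Q hQ
      have hvq := (Finset.mem_filter.mp hQ).2
      have hQm := (Finset.mem_filter.mp hQ).1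
      rw [Finset.mem_product] at hQm
      have hAH : AQ Q ⊆ H := by
        rw [AQ]
        have h1 := (Finset.mem_product.mp hQm.1).1
        have h2 := (Finset.mem_product.mp hQm.1).2
        have h3 := (Finset.mem_product.mp hQm.2).1
        have h4 := (Finset.mem_product.mp hQm.2).2
        intro x hx
        simp only [Finset.mem_insert, Finset.mem_singleton] at hx
        rcases hx with rfl | rfl | rfl | rfl <;> assumption
      exact (sum_w_constr p H (AQ Q) (BQ H Q) hAH (Finset.filter_subset _ _)
        (AQ_disj_BQ H Q hvq.2.2.1 hvq.2.2.2.1)).symm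
    -- step L3 : swap
    have hL3 : ∑ Q ∈ quadsF H q, ∑ R ∈ H.powerset.filter
          (fun R => AQ Q ⊆ R ∧ Disjoint R (BQ H Q)), w R
        = ∑ R ∈ H.powerset, ∑ Q ∈ quadsF H q,
            (if AQ Q ⊆ R ∧ Disjoint R (BQ H Q) then w R else 0) := by
      rw [← Finset.sum_comm]
      apply Finset.sum_congr rfl
      intro Q _
      rw [Finset.sum_filter]
    -- step L4
    have hL4 : ∀ R ∈ H.powerset, ∑ Q ∈ quadsF H q,
          (if AQ Q ⊆ R ∧ Disjoint R (BQ H Q) then w R else 0)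
        ≤ w R * (90 * (R.card : ℝ) ^ 3) := by
      intro R hR
      have hRH : R ⊆ H := Finset.mem_powerset.mp hR
      have hsub : (quadsF H q).filter (fun Q => AQ Q ⊆ R ∧ Disjoint R (BQ H Q))
          ⊆ quadsF R 0 := by
        intro Q hQ
        obtain ⟨hQq, hc1, hc2⟩ := Finset.mem_filter.mp hQ
        exact quad_restrict H R q Q hQq hc1 hRH hc2
      calc ∑ Q ∈ quadsF H q, (if AQ Q ⊆ R ∧ Disjoint R (BQ H Q) then w R else 0)
          = ∑ Q ∈ (quadsF H q).filter (fun Q => AQ Q ⊆ R ∧ Disjoint R (BQ H Q)), w R := by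
            rw [Finset.sum_filter]
        _ = ((quadsF H q).filter (fun Q => AQ Q ⊆ R ∧ Disjoint R (BQ H Q))).card • w R := by
            rw [Finset.sum_const]
        _ = ((quadsF H q).filter (fun Q => AQ Q ⊆ R ∧ Disjoint R (BQ H Q))).card * w R := by
            rw [nsmul_eq_mul]
        _ ≤ ((quadsF R 0).card : ℝ) * w R := by
            apply mul_le_mul_of_nonneg_right _ (hw0 R)
            exact_mod_cast Nat.cast_le.mpr (Finset.card_le_card hsub)
        _ ≤ (90 * (R.card : ℝ) ^ 3) * w R := by
            apply mul_le_mul_of_nonneg_right _ (hw0 R)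
            have := base_bound H hGP R hRH
            have := (Nat.cast_le (α := ℝ)).mpr this
            push_cast at this
            linarith
        _ = w R * (90 * (R.card : ℝ) ^ 3) := by ring
    -- assemble
    have hmom := moment_cube p (le_of_lt hp0) hp1 H
    have hmain : ((quadsF H q).card : ℝ) * (p ^ 4 * (1/2))
        ≤ 90 * ((H.card : ℝ) ^ 3 * p ^ 3 + 3 * (H.card : ℝ) ^ 2 * p ^ 2 + (H.card : ℝ) * p) := by
      calc ((quadsF H q).card : ℝ) * (p ^ 4 * (1/2))
          ≤ ∑ Q ∈ quadsF H q, p ^ (AQ Q).card * (1 - p) ^ (BQ H Q).card := hL1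
        _ = ∑ R ∈ H.powerset, ∑ Q ∈ quadsF H q,
              (if AQ Q ⊆ R ∧ Disjoint R (BQ H Q) then w R else 0) := by rw [hL2, hL3]
        _ ≤ ∑ R ∈ H.powerset, w R * (90 * (R.card : ℝ) ^ 3) := Finset.sum_le_sum hL4
        _ = 90 * ∑ R ∈ H.powerset, w R * (R.card : ℝ) ^ 3 := by
            rw [Finset.mul_sum]
            apply Finset.sum_congr rfl
            intro R _
            ring
        _ ≤ 90 * ((H.card : ℝ) ^ 3 * p ^ 3 + 3 * (H.card : ℝ) ^ 2 * p ^ 2 + (H.card : ℝ) * p) := by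
            apply mul_le_mul_of_nonneg_left _ (by norm_num)
            exact hmom
    -- final arithmetic
    have hqn' : (q:ℝ) + 1 ≤ (H.card : ℝ) := by exact_mod_cast hqn
    set n : ℝ := (H.card : ℝ) with hn
    set N : ℝ := ((quadsF H q).card : ℝ) with hN
    have hN0 : 0 ≤ N := Nat.cast_nonneg _
    have hpq : p = 1 / (2 * q) := hp
    have hexp : N ≤ 360 * q * n^3 + 2160 * (q:ℝ)^2 * n^2
        + 1440 * (q:ℝ)^3 * n := by
      have h16 : p ^ 4 * (1/2) = 1 / (32 * (q:ℝ)^4) := by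
        rw [hpq]
        field_simp
        ring
      have h3 : p ^ 3 = 1 / (8 * (q:ℝ)^3) := by rw [hpq]; field_simp; ring
      have h2 : p ^ 2 = 1 / (4 * (q:ℝ)^2) := by rw [hpq]; field_simp; ring
      rw [h16, h3, h2, hpq] at hmain
      rw [div_eq_mul_inv] at hmain
      have h32 : (0:ℝ) < 32 * (q:ℝ)^4 := by positivity
      have hqne : (q:ℝ) ≠ 0 := ne_of_gt hq0
      have e : N = N * (1 * (32*(q:ℝ)^4)⁻¹) * (32*(q:ℝ)^4) := by field_simp
      have step := mul_le_mul_of_nonneg_right hmain (le_of_lt h32)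
      have efin : (90 * (n^3*(1/(8*(q:ℝ)^3)) + 3*n^2*(1/(4*(q:ℝ)^2)) + n*(1/(2*(q:ℝ)))))
            * (32*(q:ℝ)^4)
          = 360 * q * n^3 + 2160 * (q:ℝ)^2 * n^2 + 1440 * (q:ℝ)^3 * n := by
        field_simp
        ring
      calc N = N * (1 * (32*(q:ℝ)^4)⁻¹) * (32*(q:ℝ)^4) := e
        _ ≤ (90 * (n^3*(1/(8*(q:ℝ)^3)) + 3*n^2*(1/(4*(q:ℝ)^2)) + n*(1/(2*(q:ℝ)))))
            * (32*(q:ℝ)^4) := step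
        _ = 360 * q * n^3 + 2160 * (q:ℝ)^2 * n^2 + 1440 * (q:ℝ)^3 * n := efin
    clear hL1 hL2 hL3 hL4 hmom hmain hperQ hw0 hbern
    clear hw w
    clear hp1 hp0 h1p hpq
    clear_value N n p
    clear hp p
    have hqlen : (q:ℝ) ≤ n := by linarith
    have hle1 : (q:ℝ)^2 * n^2 ≤ q * n^3 := by
      have := mul_le_mul_of_nonneg_right hqlen
        (by positivity : (0:ℝ) ≤ (q:ℝ) * n^2)
      nlinarith [this]
    have hle2 : (q:ℝ)^3 * n ≤ q * n^3 := by
      have hq2 : (q:ℝ)^2 ≤ n^2 := by nlinarith [hqlen, hq0]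
      have := mul_le_mul_of_nonneg_right hq2
        (by positivity : (0:ℝ) ≤ (q:ℝ) * n)
      nlinarith [this]
    calc N ≤ 360 * q * n^3 + 2160 * (q:ℝ)^2 * n^2
        + 1440 * (q:ℝ)^3 * n := hexp
      _ ≤ 360 * q * n^3 + 2160 * (q * n^3) + 1440 * (q * n^3) := by nlinarith [hle1, hle2]
      _ = 3960 * n^3 * q := by ring
      _ ≤ 4000 * n^3 * q := by nlinarith [hq0, pow_nonneg hn0 3]

end

lemma ceps_subset (H : Finset GPlane) (q : ℕ) :
    crossingEdgePairs H q ⊆ ↑((quadsF H q).image (fun Q => (zQ1 Q, zQ2 Q))) := by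
  rintro z ⟨h0, h1, h2, h₁, hh₁, h₂, hh₂, g₁, hg₁, g₂, hg₂, hne1, hne2, hz1, hz2, hdet, hcard⟩
  set Q : Quad := ((h₁, h₂), (g₁, g₂)) with hQ
  have hdQ : detQ Q ≠ 0 := hdet
  obtain ⟨e1, e2⟩ := z_unique Q hdQ hz1.1 hz1.2 hz2.1 hz2.2 h0 h1
  rw [Finset.mem_coe, Finset.mem_image]
  refine ⟨Q, ?_, ?_⟩
  · refine Finset.mem_filter.mpr ⟨?_, hne1, hne2, hdQ, ?_, ?_⟩
    · rw [Finset.mem_product]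
      exact ⟨Finset.mem_product.mpr ⟨hh₁, hh₂⟩, Finset.mem_product.mpr ⟨hg₁, hg₂⟩⟩
    · rw [← e1, ← e2]; exact h2
    · rw [← e1, ← e2]; exact hcard
  · rw [← e1, ← e2]


/-- The number of pairs of edges of `Arr(H)` whose
`xy`-projections cross and whose connecting vertical segment crosses at most
`q` planes of `H` is `O(n³q)`. -/

theorem edge_pairs_with_q_crossings :
    ∃ C : ℝ, 0 < C ∧ ∀ H : Finset GPlane, GenPos H → ∀ q : ℕ, 1 ≤ q →
      (crossingEdgePairs H q).Finite ∧
      ((crossingEdgePairs H q).ncard : ℝ) ≤ C * (H.card : ℝ) ^ 3 * q := by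
  refine ⟨4000, by norm_num, ?_⟩
  intro H hGP q hq
  have hsub := ceps_subset H q
  have hfin : (crossingEdgePairs H q).Finite :=
    Set.Finite.subset (Finset.finite_toSet _) hsub
  refine ⟨hfin, ?_⟩
  have h1 : (crossingEdgePairs H q).ncard
      ≤ ((quadsF H q).image (fun Q => (zQ1 Q, zQ2 Q))).card := by
    have := Set.ncard_le_ncard hsub (Finset.finite_toSet _)
    rwa [Set.ncard_coe_finset] at this
  have h2 : ((quadsF H q).image (fun Q => (zQ1 Q, zQ2 Q))).card ≤ (quadsF H q).card :=
    Finset.card_image_le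
  have h3 := Nq_bound H hGP q hq
  calc ((crossingEdgePairs H q).ncard : ℝ) ≤ ((quadsF H q).card : ℝ) := by
        exact_mod_cast le_trans h1 h2
    _ ≤ 4000 * (H.card : ℝ)^3 * q := h3
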